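/- arXiv:2009.00696 — 6 statements merged into one kernel-verified Lean document; each statement's English description precedes it below -/
import Mathlib

section
/- Let G ⊂ ℝⁿ be open, X ⊂ G compact, and F : G → Set ℝⁿ satisfy the Filippov conditions. Define Φ : ℝ≥0 × X → Set X by b ∈ Φ(T,a) iff there exists a solution x : [0,T] → X of ẋ ∈ F(x) with x(0)=a and x(T)=b. Then Φ satisfies the monoid properties: Φ(0,x) = {x} and Φ(t, Φ(s,x)) = Φ(t+s, x). -/
open Set MeasureTheory Filter Topology

namespace DIncl

variable {E : Type*} [NormedAddCommGroup E] [NormedSpace ℝ E] [CompleteSpace E]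

/-- Upper semicontinuity of a set-valued map on a set `D`. -/
def USCOn {α β : Type*} [PseudoMetricSpace α] [PseudoMetricSpace β]
    (F : α → Set β) (D : Set α) : Prop :=
  ∀ x ∈ D, ∀ ε > 0, ∃ δ > 0, ∀ y ∈ D, dist y x < δ →
    F y ⊆ {z | ∃ w ∈ F x, dist z w < ε}

/-- The Filippov conditions on `D`: upper semicontinuous with compact, convex,
nonempty values. -/
def FilippovOn {α : Type*} [PseudoMetricSpace α] (F : α → Set E) (D : Set α) : Prop :=
  USCOn F D ∧ ∀ x ∈ D, IsCompact (F x) ∧ Convex ℝ (F x) ∧ (F x).Nonempty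

/-- `x` is a solution of the differential inclusion `ẋ ∈ F x` on the set `I`,
staying in `X`: an absolutely continuous function whose a.e. derivative lies in
`F (x t)`, encoded via the integral representation `x b = x a + ∫_a^b v`. -/
def IsSolOn (F : E → Set E) (X : Set E) (x : ℝ → E) (I : Set ℝ) : Prop :=
  (∀ t ∈ I, x t ∈ X) ∧
  ∃ v : ℝ → E,
    (∀ a ∈ I, ∀ b ∈ I, IntervalIntegrable v volume a b) ∧
    (∀ᵐ t ∂volume, t ∈ I → v t ∈ F (x t)) ∧
    (∀ a ∈ I, ∀ b ∈ I, x b = x a + ∫ t in a..b, v t)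

/-- The solution multiflow `Φ(T,a)` of `ẋ ∈ F x` in `X`. -/
def mflow (F : E → Set E) (X : Set E) (T : ℝ) (a : E) : Set E :=
  {b | ∃ x : ℝ → E, IsSolOn F X x (Icc 0 T) ∧ x 0 = a ∧ x T = b}

/-- `Φ(I,U)`. -/
def mflowSet (F : E → Set E) (X : Set E) (I : Set ℝ) (U : Set E) : Set E :=
  ⋃ t ∈ I, ⋃ a ∈ U, mflow F X t a

/-- Maximal invariant subset of `U`: points admitting a full-time orbit in `U`. -/
def maxInv (F : E → Set E) (U : Set E) : Set E :=
  {x | ∃ ψ : ℝ → E, IsSolOn F U ψ univ ∧ ψ 0 = x}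

/-- `S` is invariant: every point of `S` has a full-time orbit staying in `S`. -/
def IsInvSet (F : E → Set E) (S : Set E) : Prop := S ⊆ maxInv F S

/-- The restricted omega-limit set `ω_S(U)` (with `Φ^S = mflow F S`). -/
def omegaS (F : E → Set E) (S U : Set E) : Set E :=
  ⋂ t ∈ Ici (0:ℝ), closure (mflowSet F S (Ici t) U)

/-- `(Φ^S)^*(I,U)` for the dual (backward-time) multiflow. -/
def mflowDualSet (F : E → Set E) (S : Set E) (I : Set ℝ) (U : Set E) : Set E :=
  ⋃ t ∈ I, ⋃ a ∈ U, {b | a ∈ mflow F S (-t) b}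

/-- The restricted alpha-limit set `α_S(U)`. -/
def alphaS (F : E → Set E) (S U : Set E) : Set E :=
  ⋂ t ∈ Iio (0:ℝ), closure (mflowDualSet F S (Iic t) U)

/-- The interior of `U` relative to `X`. -/
def relInt (X U : Set E) : Set E := {x ∈ X | U ∈ nhdsWithin x X}

/-- The closure of `U` relative to `X`. -/
def relCl (X U : Set E) : Set E := closure U ∩ X

/-- `A` is an attractor in `S`: the `ω_S`-limit set of a neighborhood of itself in `S`. -/
def IsAttractorIn (F : E → Set E) (S A : Set E) : Prop :=
  A ⊆ S ∧ ∃ U, A ⊆ relInt S U ∧ U ⊆ S ∧ omegaS F S U = A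

/-- `R` is a repeller in `S`: the `α_S`-limit set of a neighborhood of itself in `S`. -/
def IsRepellerIn (F : E → Set E) (S R : Set E) : Prop :=
  R ⊆ S ∧ ∃ U, R ⊆ relInt S U ∧ U ⊆ S ∧ alphaS F S U = R

/-- The dual repeller of an attractor `A` in `S`. -/
def dualRep (F : E → Set E) (S A : Set E) : Set E :=
  {x ∈ S | ¬ omegaS F S {x} ⊆ A}

/-- The dual attractor of a repeller `R` in `S`. -/
def dualAtt (F : E → Set E) (S R : Set E) : Set E :=
  {x ∈ S | ¬ alphaS F S {x} ⊆ R}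

end DIncl

open DIncl Set MeasureTheory Filter Topology


section AuxSol

variable {E : Type*} [NormedAddCommGroup E] [NormedSpace ℝ E] [CompleteSpace E]

lemma isSolOn_mono {F : E → Set E} {X : Set E} {x : ℝ → E} {I J : Set ℝ}
    (hIJ : I ⊆ J) (h : IsSolOn F X x J) : IsSolOn F X x I := by
  obtain ⟨hmem, v, hint, hae, heq⟩ := h
  exact ⟨fun u hu => hmem u (hIJ hu), v,
    fun a ha b hb => hint a (hIJ ha) b (hIJ hb),
    hae.mono fun u hu hI => hu (hIJ hI),
    fun a ha b hb => heq a (hIJ ha) b (hIJ hb)⟩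

lemma isSolOn_shift {F : E → Set E} {X : Set E} {x : ℝ → E} {s t : ℝ}
    (h : IsSolOn F X x (Icc 0 (t + s))) (hs : 0 ≤ s) (ht : 0 ≤ t) :
    IsSolOn F X (fun u => x (u + s)) (Icc 0 t) := by
  obtain ⟨hmem, v, hint, hae, heq⟩ := h
  have hsub : ∀ u ∈ Icc (0:ℝ) t, u + s ∈ Icc 0 (t + s) := by
    intro u hu; exact ⟨by linarith [hu.1], by linarith [hu.2]⟩
  refine ⟨fun u hu => hmem _ (hsub u hu), fun u => v (u + s), ?_, ?_, ?_⟩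
  · intro a ha b hb
    have := (hint _ (hsub a ha) _ (hsub b hb)).comp_add_right s
    simpa using this
  · have := ((measurePreserving_add_right volume s).quasiMeasurePreserving.tendsto_ae).eventually hae
    filter_upwards [this] with u hu hut
    exact hu (hsub u hut)
  · intro a ha b hb
    rw [intervalIntegral.integral_comp_add_right]
    exact heq _ (hsub a ha) _ (hsub b hb)

lemma isSolOn_glue {F : E → Set E} {X : Set E} {x1 x2 : ℝ → E} {s t : ℝ}
    (hs : 0 ≤ s) (ht : 0 ≤ t)
    (h1 : IsSolOn F X x1 (Icc 0 s)) (h2 : IsSolOn F X x2 (Icc 0 t))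
    (hm : x2 0 = x1 s) :
    IsSolOn F X (fun u => if u ≤ s then x1 u else x2 (u - s)) (Icc 0 (t + s)) := by
  obtain ⟨hmem1, v1, hint1, hae1, heq1⟩ := h1
  obtain ⟨hmem2, v2, hint2, hae2, heq2⟩ := h2
  set x3 : ℝ → E := fun u => if u ≤ s then x1 u else x2 (u - s) with hx3
  set v3 : ℝ → E := fun u => if u ≤ s then v1 u else v2 (u - s) with hv3
  have h0s : (0:ℝ) ∈ Icc (0:ℝ) s := ⟨le_refl 0, hs⟩
  have hss : s ∈ Icc (0:ℝ) s := ⟨hs, le_refl s⟩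
  have h0t : (0:ℝ) ∈ Icc (0:ℝ) t := ⟨le_refl 0, ht⟩
  -- integrability pieces
  have hA : IntervalIntegrable v3 volume 0 s := by
    refine (hint1 0 h0s s hss).congr ?_
    intro u hu
    rw [Set.uIoc_of_le hs] at hu
    simp [hv3, hu.2]
  have hB : IntervalIntegrable v3 volume s (t + s) := by
    have := (hint2 0 h0t t ⟨ht, le_refl t⟩).comp_sub_right s
    simp only [zero_add] at this
    refine this.congr ?_
    intro u hu
    rw [Set.uIoc_of_le (by linarith)] at hu
    simp [hv3, not_le.2 hu.1]
  have hAB : IntervalIntegrable v3 volume 0 (t + s) := hA.trans hB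
  have hintv : ∀ a ∈ Icc (0:ℝ) (t + s), ∀ b ∈ Icc (0:ℝ) (t + s),
      IntervalIntegrable v3 volume a b := by
    intro a ha b hb
    refine hAB.mono_set (uIcc_subset_uIcc ?_ ?_) <;>
      rw [uIcc_of_le (by linarith)]
    exacts [ha, hb]
  -- key formula from 0
  have key : ∀ b ∈ Icc (0:ℝ) (t + s), x3 b = x1 0 + ∫ u in (0:ℝ)..b, v3 u := by
    intro b hb
    by_cases hbs : b ≤ s
    · have : ∫ u in (0:ℝ)..b, v3 u = ∫ u in (0:ℝ)..b, v1 u := by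
        refine intervalIntegral.integral_congr fun u hu => ?_
        rw [uIcc_of_le hb.1] at hu
        simp [hv3, le_trans hu.2 hbs]
      rw [this]
      simpa [hx3, hbs] using heq1 0 h0s b ⟨hb.1, hbs⟩
    · have hsb : s < b := lt_of_not_ge hbs
      have hsbInt : IntervalIntegrable v3 volume s b := by
        have h1 : s ∈ uIcc s (t + s) := by
          rw [uIcc_of_le (by linarith)]; exact ⟨le_refl s, by linarith⟩
        have h2 : b ∈ uIcc s (t + s) := by
          rw [uIcc_of_le (by linarith)]; exact ⟨le_of_lt hsb, hb.2⟩
        exact hB.mono_set (uIcc_subset_uIcc h1 h2)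
      have hadj : (∫ u in (0:ℝ)..s, v3 u) + (∫ u in s..b, v3 u)
          = ∫ u in (0:ℝ)..b, v3 u :=
        intervalIntegral.integral_add_adjacent_intervals hA hsbInt
      have e1 : ∫ u in (0:ℝ)..s, v3 u = x1 s - x1 0 := by
        have : ∫ u in (0:ℝ)..s, v3 u = ∫ u in (0:ℝ)..s, v1 u := by
          refine intervalIntegral.integral_congr fun u hu => ?_
          rw [uIcc_of_le hs] at hu
          simp [hv3, hu.2]
        rw [this, heq1 0 h0s s hss]; abel
      have e2 : ∫ u in s..b, v3 u = x2 (b - s) - x2 0 := by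
        have h1 : ∫ u in s..b, v3 u = ∫ u in s..b, v2 (u - s) := by
          refine intervalIntegral.integral_congr_ae (Filter.Eventually.of_forall
            fun u hu => ?_)
          rw [Set.uIoc_of_le (le_of_lt hsb)] at hu
          simp [hv3, not_le.2 hu.1]
        rw [h1, intervalIntegral.integral_comp_sub_right, sub_self]
        rw [heq2 0 h0t (b - s) ⟨by linarith, by linarith [hb.2]⟩]; abel
      have hx3b : x3 b = x2 (b - s) := by simp [hx3, hbs]
      rw [hx3b, ← hadj, e1, e2, hm]; abel
  refine ⟨?_, v3, hintv, ?_, ?_⟩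
  · intro u hu
    by_cases hus : u ≤ s
    · simpa [hx3, hus] using hmem1 u ⟨hu.1, hus⟩
    · have : u - s ∈ Icc (0:ℝ) t := ⟨by linarith [lt_of_not_ge hus], by linarith [hu.2]⟩
      simpa [hx3, hus] using hmem2 _ this
  · have hae2' := ((measurePreserving_add_right volume (-s)).quasiMeasurePreserving.tendsto_ae).eventually hae2
    filter_upwards [hae1, hae2'] with u hu1 hu2 hu
    by_cases hus : u ≤ s
    · simpa [hx3, hv3, hus] using hu1 ⟨hu.1, hus⟩
    · have hmem : u + -s ∈ Icc (0:ℝ) t :=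
        ⟨by linarith [lt_of_not_ge hus], by linarith [hu.2]⟩
      have := hu2 hmem
      simp only [← sub_eq_add_neg] at this
      simpa [hx3, hv3, hus] using this
  · intro a ha b hb
    have hadj : (∫ u in (0:ℝ)..a, v3 u) + (∫ u in a..b, v3 u)
        = ∫ u in (0:ℝ)..b, v3 u :=
      intervalIntegral.integral_add_adjacent_intervals
        (hintv 0 ⟨le_refl 0, by linarith⟩ a ha) (hintv a ha b hb)
    rw [key b hb, key a ha, ← hadj]; abel

end AuxSol

/-- The solution multiflow satisfies the monoid properties. -/
theorem solution_multiflow_monoid {n : ℕ} (G X : Set (Fin n → ℝ)) (hG : IsOpen G)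
    (hXG : X ⊆ G) (hX : IsCompact X)
    (F : (Fin n → ℝ) → Set (Fin n → ℝ)) (hF : FilippovOn F G) :
    (∀ x ∈ X, mflow F X 0 x = {x}) ∧
    (∀ s ≥ (0:ℝ), ∀ t ≥ (0:ℝ), ∀ x ∈ X,
      (⋃ y ∈ mflow F X s x, mflow F X t y) = mflow F X (t + s) x) := by
  constructor
  · intro x hx
    ext b
    simp only [mflow, mem_setOf_eq, mem_singleton_iff]
    constructor
    · rintro ⟨y, _, h0, hT⟩
      rw [← hT, h0]
    · rintro rfl
      refine ⟨fun _ => b, ⟨fun u _ => hx, fun _ => 0, ?_, ?_, ?_⟩, rfl, rfl⟩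
      · intro a _ c _; exact intervalIntegrable_const
      · have : volume ({0} : Set ℝ) = 0 := measure_singleton 0
        rw [ae_iff]
        refine measure_mono_null (fun u hu => ?_) this
        simp only [mem_setOf_eq, not_forall] at hu
        have := hu.1
        rw [Icc_self] at this
        exact this
      · intro a ha c hc
        rw [Icc_self, mem_singleton_iff] at ha hc
        subst ha; subst hc; simp
  · intro s hs t ht x hx
    ext b
    simp only [mem_iUnion, exists_prop]
    constructor
    · rintro ⟨y, ⟨x1, hsol1, h10, h1s⟩, x2, hsol2, h20, h2t⟩
      refine ⟨fun u => if u ≤ s then x1 u else x2 (u - s),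
        isSolOn_glue hs ht hsol1 hsol2 (by rw [h20, h1s]), by simp [hs, h10], ?_⟩
      by_cases hts : t + s ≤ s
      · have ht0 : t = 0 := le_antisymm (by linarith) ht
        subst ht0
        simp only [zero_add, le_refl, if_pos]
        rw [h1s, ← h20]
        exact h2t
      · simp only [if_neg hts, add_sub_cancel_right]
        exact h2t
    · rintro ⟨y, hsol, h0, hts⟩
      refine ⟨y s, ⟨y, isSolOn_mono (Icc_subset_Icc le_rfl (by linarith)) hsol, h0, rfl⟩,
        fun u => y (u + s), isSolOn_shift hsol hs ht, by simp, by rw [← hts]⟩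
end

section
/- Let G ⊂ ℝⁿ be open, X ⊂ G compact, and F : G → Set ℝⁿ satisfy the Filippov conditions. The solution multiflow Φ defined by b ∈ Φ(T,a) iff there is a solution x : [0,T] → X of ẋ ∈ F(x) with x(0)=a, x(T)=b, is compact-valued: Φ(T,a) is a compact (possibly empty) subset of X for every T ≥ 0 and a ∈ X. -/
open Set MeasureTheory Filter Topology

open DIncl Set MeasureTheory Filter Topology Pointwise



section Aux
open Metric intervalIntegral

theorem lipschitzDerivBound {V : Type*} [NormedAddCommGroup V] [NormedSpace ℝ V]
    {M : NNReal} {y : ℝ → V} (hy : LipschitzWith M y) (t : ℝ) : ‖deriv y t‖ ≤ (M : ℝ) := by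
  by_cases h : DifferentiableAt ℝ y t
  · have h1 : ‖fderiv ℝ y t‖ ≤ (M : ℝ) :=
      norm_fderiv_le_of_lipschitzOn ℝ univ_mem (lipschitzOnWith_univ.2 hy)
    calc ‖deriv y t‖ = ‖fderiv ℝ y t 1‖ := by rw [fderiv_apply_one_eq_deriv]
    _ ≤ ‖fderiv ℝ y t‖ * ‖(1:ℝ)‖ := (fderiv ℝ y t).le_opNorm 1
    _ ≤ (M : ℝ) := by simpa using h1
  · simp [deriv_zero_of_not_differentiableAt h, M.coe_nonneg]

theorem lipschitzIntervalIntegrableDeriv {V : Type*} [NormedAddCommGroup V] [NormedSpace ℝ V]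
    [CompleteSpace V] [MeasurableSpace V] [BorelSpace V]
    {M : NNReal} {y : ℝ → V} (hy : LipschitzWith M y) (a b : ℝ) :
    IntervalIntegrable (deriv y) volume a b :=
  (_root_.intervalIntegrable_const (c := (M:ℝ))).mono_fun
    ((stronglyMeasurable_deriv y).aestronglyMeasurable.restrict)
    (Eventually.of_forall fun t => by
      rw [Real.norm_eq_abs, abs_of_nonneg M.coe_nonneg]; exact lipschitzDerivBound hy t)

theorem lipschitzFTC {V : Type*} [NormedAddCommGroup V] [NormedSpace ℝ V]
    [FiniteDimensional ℝ V] [MeasurableSpace V] [BorelSpace V]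
    {M : NNReal} {y : ℝ → V} (hy : LipschitzWith M y) (c d : ℝ) :
    y d = y c + ∫ t in c..d, deriv y t := by
  have hcont := hy.continuous
  set h : ℕ → ℝ := fun j => (1:ℝ)/(j+1) with hh
  have hpos : ∀ j, 0 < h j := fun j => by positivity
  have hlim0 : Tendsto h atTop (𝓝 0) := tendsto_one_div_add_atTop_nhds_zero_nat
  -- the difference quotients
  set q : ℕ → ℝ → V := fun j t => (h j)⁻¹ • (y (t + h j) - y t) with hq
  have hqcont : ∀ j, Continuous (q j) := fun j =>
    ((hcont.comp (continuous_add_right _)).sub hcont).const_smul _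
  have hqbd : ∀ j t, ‖q j t‖ ≤ (M:ℝ) := by
    intro j t
    have h1 : ‖y (t + h j) - y t‖ ≤ (M:ℝ) * h j := by
      have := hy.dist_le_mul (t + h j) t
      simpa [dist_eq_norm, add_sub_cancel_left, abs_of_nonneg (hpos j).le] using this
    have e : ‖q j t‖ = (h j)⁻¹ * ‖y (t + h j) - y t‖ := by
      rw [hq]
      simp only []
      rw [norm_smul, Real.norm_eq_abs, abs_of_nonneg (inv_nonneg.2 (hpos j).le)]
    rw [e]
    calc (h j)⁻¹ * ‖y (t + h j) - y t‖ ≤ (h j)⁻¹ * ((M:ℝ) * h j) :=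
          mul_le_mul_of_nonneg_left h1 (inv_nonneg.2 (hpos j).le)
    _ = (M:ℝ) := by field_simp [(hpos j).ne']
  -- sequences t + h j tend to t within ≠ t
  have hseq : ∀ t : ℝ, Tendsto (fun j => t + h j) atTop (𝓝[≠] t) := by
    intro t
    apply tendsto_nhdsWithin_of_tendsto_nhds_of_eventually_within
    · simpa using (tendsto_const_nhds (x := t)).add hlim0
    · exact Eventually.of_forall fun j => by
        simp [mem_compl_singleton_iff]; exact ne_of_gt (by linarith [hpos j])
  -- pointwise convergence at differentiability points
  have hptwise : ∀ t, DifferentiableAt ℝ y t → Tendsto (fun j => q j t) atTop (𝓝 (deriv y t)) := by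
    intro t ht
    have h1 : Tendsto (slope y t) (𝓝[≠] t) (𝓝 (deriv y t)) :=
      hasDerivAt_iff_tendsto_slope.1 ht.hasDerivAt
    have h2 := h1.comp (hseq t)
    refine h2.congr fun j => ?_
    simp [hq, slope_def_module, add_sub_cancel_left]
  -- Key A
  have keyA : Tendsto (fun j => ∫ t in c..d, q j t) atTop (𝓝 (∫ t in c..d, deriv y t)) := by
    apply intervalIntegral.tendsto_integral_filter_of_dominated_convergence (fun _ => (M:ℝ))
    · exact Eventually.of_forall fun j => (hqcont j).aestronglyMeasurable.restrict
    · exact Eventually.of_forall fun j => Eventually.of_forall fun t => fun _ => hqbd j t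
    · exact _root_.intervalIntegrable_const
    · exact (hy.ae_differentiableAt (μ := volume)).mono fun t ht _ => hptwise t ht
  -- Key B : each integral of q j equals a difference of small averages
  have keyB : Tendsto (fun j => ∫ t in c..d, q j t) atTop (𝓝 (y d - y c)) := by
    have hint : ∀ a b : ℝ, IntervalIntegrable y volume a b := fun a b =>
      hcont.intervalIntegrable a b
    have hcompint : ∀ j (a b : ℝ), IntervalIntegrable (fun t => y (t + h j)) volume a b :=
      fun j a b => (hcont.comp (continuous_add_right _)).intervalIntegrable a b
    have hrw : ∀ j, ∫ t in c..d, q j t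
        = (h j)⁻¹ • (∫ t in d..d + h j, y t) - (h j)⁻¹ • (∫ t in c..c + h j, y t) := by
      intro j
      have e1 : ∫ t in c..d, q j t
          = (h j)⁻¹ • ((∫ t in c..d, y (t + h j)) - ∫ t in c..d, y t) := by
        rw [hq]
        simp only []
        rw [intervalIntegral.integral_smul, intervalIntegral.integral_sub (hcompint j c d) (hint c d)]
      have e2 : (∫ t in c..d, y (t + h j)) = ∫ t in c + h j..d + h j, y t :=
        intervalIntegral.integral_comp_add_right _ _
      have e3 : (∫ t in c..d + h j, y t) - (∫ t in c..c + h j, y t) = ∫ t in c + h j..d + h j, y t :=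
        intervalIntegral.integral_interval_sub_left (hint c (d + h j)) (hint c (c + h j))
      have e4 : (∫ t in c..d + h j, y t) - (∫ t in c..d, y t) = ∫ t in d..d + h j, y t :=
        intervalIntegral.integral_interval_sub_left (hint c (d + h j)) (hint c d)
      rw [e1, e2, ← e3]
      rw [← smul_sub]
      congr 1
      have := e4
      abel_nf
      abel_nf at this
      linear_combination (norm := abel_nf) this
    have hd' : ∀ e : ℝ, Tendsto (fun j => (h j)⁻¹ • (∫ t in e..e + h j, y t)) atTop (𝓝 (y e)) := by
      intro e
      have hG : HasDerivAt (fun u => ∫ t in e..u, y t) (y e) e :=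
        intervalIntegral.integral_hasDerivAt_right (hint e e)
          hcont.aestronglyMeasurable.stronglyMeasurableAtFilter hcont.continuousAt
      have h1 : Tendsto (slope (fun u => ∫ t in e..u, y t) e) (𝓝[≠] e) (𝓝 (y e)) :=
        hasDerivAt_iff_tendsto_slope.1 hG
      have h2 := h1.comp (hseq e)
      refine h2.congr fun j => ?_
      simp [slope_def_module, add_sub_cancel_left, intervalIntegral.integral_same]
    have := ((hd' d).sub (hd' c))
    exact Tendsto.congr (fun j => (hrw j).symm) this
  have := tendsto_nhds_unique keyA keyB
  rw [this]; abel


theorem filippov_bound {n : ℕ} (G X : Set (Fin n → ℝ)) (hXG : X ⊆ G) (hX : IsCompact X)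
    (F : (Fin n → ℝ) → Set (Fin n → ℝ)) (hF : FilippovOn F G) :
    ∃ M : ℝ, 0 < M ∧ ∀ x ∈ X, ∀ z ∈ F x, ‖z‖ ≤ M := by
  have key : ∀ x : Fin n → ℝ, ∃ R δ : ℝ, 0 < δ ∧
      (x ∈ X → ∀ y ∈ G, dist y x < δ → ∀ z ∈ F y, ‖z‖ ≤ R) := by
    intro x
    by_cases hx : x ∈ X
    · obtain ⟨hcomp, -, -⟩ := hF.2 x (hXG hx)
      obtain ⟨R₀, hR₀⟩ := isBounded_iff_forall_norm_le.1 hcomp.isBounded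
      obtain ⟨δ, hδ, husc⟩ := hF.1 x (hXG hx) 1 one_pos
      refine ⟨R₀ + 1, δ, hδ, fun _ y hy hdist z hz => ?_⟩
      obtain ⟨w, hw, hwz⟩ := husc y hy hdist hz
      calc ‖z‖ = ‖w + (z - w)‖ := by rw [show w + (z - w) = z from by abel]
      _ ≤ ‖w‖ + ‖z - w‖ := norm_add_le _ _
      _ ≤ R₀ + 1 := add_le_add (hR₀ w hw) (by rw [← dist_eq_norm]; exact hwz.le)
    · exact ⟨0, 1, one_pos, fun h => absurd h hx⟩
  choose R δ hδ hRδ using key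
  rcases hX.elim_nhds_subcover (fun x => Metric.ball x (δ x))
      (fun x _ => Metric.ball_mem_nhds x (hδ x)) with ⟨t, htX, hcover⟩
  refine ⟨(insert (1:ℝ) (t.image R)).max' ⟨1, Finset.mem_insert_self _ _⟩,
    lt_of_lt_of_le one_pos (Finset.le_max' _ _ (Finset.mem_insert_self _ _)), ?_⟩
  intro x hx z hz
  obtain ⟨x₀, hx₀t, hxball⟩ := Set.mem_iUnion₂.1 (hcover hx)
  have h1 : ‖z‖ ≤ R x₀ := hRδ x₀ (htX x₀ hx₀t) x (hXG hx) (Metric.mem_ball.1 hxball) z hz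
  exact h1.trans (Finset.le_max' _ _ (Finset.mem_insert_of_mem (Finset.mem_image_of_mem R hx₀t)))

end Aux

set_option maxHeartbeats 2000000
set_option synthInstance.maxHeartbeats 1000000

/-- The solution multiflow is compact-valued. -/
theorem solution_multiflow_compact_valued {n : ℕ} (G X : Set (Fin n → ℝ)) (hG : IsOpen G)
    (hXG : X ⊆ G) (hX : IsCompact X)
    (F : (Fin n → ℝ) → Set (Fin n → ℝ)) (hF : FilippovOn F G)
    (T : ℝ) (hT : 0 ≤ T) (a : Fin n → ℝ) (ha : a ∈ X) :
    IsCompact (mflow F X T a) := by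
  classical
  obtain ⟨M, hM0, hM⟩ := filippov_bound G X hXG hX F hF
  set M' : NNReal := ⟨M, hM0.le⟩ with hM'def
  have hM'coe : (M' : ℝ) = M := rfl
  have hsub : mflow F X T a ⊆ X := by
    rintro b ⟨x, ⟨hxX, -⟩, -, rfl⟩
    exact hxX T ⟨hT, le_refl T⟩
  refine IsCompact.of_isClosed_subset hX ?_ hsub
  apply IsSeqClosed.isClosed
  intro b p hb hbp
  choose x hsol hx0 hxT using hb
  have hxX : ∀ k, ∀ t ∈ Icc 0 T, x k t ∈ X := fun k => (hsol k).1
  choose v hv using fun k => (hsol k).2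
  have hvint : ∀ k, ∀ s ∈ Icc 0 T, ∀ u ∈ Icc 0 T, IntervalIntegrable (v k) volume s u :=
    fun k => (hv k).1
  have hvmem : ∀ k, ∀ᵐ t ∂(volume : Measure ℝ), t ∈ Icc 0 T → v k t ∈ F (x k t) :=
    fun k => (hv k).2.1
  have hvFTC : ∀ k, ∀ s ∈ Icc 0 T, ∀ u ∈ Icc 0 T, x k u = x k s + ∫ τ in s..u, v k τ :=
    fun k => (hv k).2.2
  have hvbd : ∀ k, ∀ᵐ t ∂(volume : Measure ℝ), t ∈ Icc 0 T → ‖v k t‖ ≤ M := fun k =>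
    (hvmem k).mono fun t ht hIcc => hM _ (hxX k t hIcc) _ (ht hIcc)
  -- each solution is M-Lipschitz on Icc 0 T
  have hlip : ∀ k, ∀ s ∈ Icc 0 T, ∀ u ∈ Icc 0 T, dist (x k u) (x k s) ≤ M * dist u s := by
    intro k s hs u hu
    have h1 : x k u - x k s = ∫ τ in s..u, v k τ := by rw [hvFTC k s hs u hu]; abel
    have hsub' : Set.uIoc s u ⊆ Icc 0 T :=
      Set.uIoc_subset_uIcc.trans (Set.uIcc_subset_Icc hs hu)
    have hbd : ∀ᵐ τ ∂(volume : Measure ℝ), τ ∈ Set.uIoc s u → ‖v k τ‖ ≤ M :=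
      (hvbd k).mono fun τ h hτ => h (hsub' hτ)
    calc dist (x k u) (x k s) = ‖∫ τ in s..u, v k τ‖ := by rw [dist_eq_norm, h1]
    _ ≤ M * |u - s| := intervalIntegral.norm_integral_le_of_norm_le_const_ae hbd
    _ = M * dist u s := by rw [Real.dist_eq]
  -- the clamp map
  set c : ℝ → ℝ := fun t => max 0 (min t T) with hc
  have hcmem : ∀ t, c t ∈ Icc 0 T := fun t =>
    ⟨le_max_left _ _, max_le hT (min_le_right _ _)⟩
  have hceq : ∀ t ∈ Icc 0 T, c t = t := fun t ht => by
    rw [hc]; simp only []; rw [min_eq_left ht.2, max_eq_right ht.1]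
  have hclip : LipschitzWith 1 c := (LipschitzWith.id.min_const T).const_max 0
  -- bounded continuous functions on Icc 0 T
  haveI : CompactSpace ↥(Icc (0:ℝ) T) := isCompact_iff_compactSpace.mp isCompact_Icc
  have hlipk : ∀ k, LipschitzWith M' fun q : Icc (0:ℝ) T => x k q := by
    intro k
    apply LipschitzWith.of_dist_le_mul
    intro q r
    rw [Subtype.dist_eq, hM'coe]
    exact hlip k r r.2 q q.2
  set fk : ℕ → BoundedContinuousFunction (Icc (0:ℝ) T) (Fin n → ℝ) := fun k =>
    BoundedContinuousFunction.mkOfCompact ⟨fun q => x k q, (hlipk k).continuous⟩ with hfk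
  have hfkcoe : ∀ k (q : Icc (0:ℝ) T), fk k q = x k q := fun k q => rfl
  set A : Set (BoundedContinuousFunction (Icc (0:ℝ) T) (Fin n → ℝ)) :=
    {g | LipschitzWith M' ⇑g ∧ ∀ q, g q ∈ X} with hA
  have hAclosed : IsClosed A := by
    apply IsSeqClosed.isClosed
    intro g g₀ hgA hgg₀
    have heval : ∀ q, Tendsto (fun j => g j q) atTop (𝓝 (g₀ q)) := fun q =>
      ((continuous_eval_const q).tendsto g₀).comp hgg₀
    constructor
    · apply LipschitzWith.of_dist_le_mul
      intro q r
      have hd : Tendsto (fun j => dist (g j q) (g j r)) atTop (𝓝 (dist (g₀ q) (g₀ r))) :=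
        (heval q).dist (heval r)
      exact le_of_tendsto hd (Eventually.of_forall fun j => (hgA j).1.dist_le_mul q r)
    · exact fun q => hX.isClosed.mem_of_tendsto (heval q)
        (Eventually.of_forall fun j => (hgA j).2 q)
  have hAequi : Equicontinuous fun g : A => ⇑(g : BoundedContinuousFunction (Icc (0:ℝ) T) (Fin n → ℝ)) := by
    intro q
    rw [Metric.equicontinuousAt_iff]
    intro ε hε
    refine ⟨ε / (M + 1), by positivity, fun r hr g => ?_⟩
    have h1 : dist (g.1 q) (g.1 r) ≤ M * dist r q := by
      have := g.2.1.dist_le_mul q r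
      rw [hM'coe] at this
      rwa [dist_comm r q]
    have h2 : M * dist r q < ε := by
      have hd : dist r q < ε / (M + 1) := hr
      have : M * dist r q ≤ M * (ε / (M+1)) := by
        apply mul_le_mul_of_nonneg_left hd.le hM0.le
      calc M * dist r q < (M+1) * (ε / (M+1)) := by
            rcases eq_or_lt_of_le (dist_nonneg : (0:ℝ) ≤ dist r q) with h | h
            · rw [← h]; simp; positivity
            · calc M * dist r q < (M+1) * dist r q := by nlinarith
              _ ≤ (M+1) * (ε / (M+1)) := by nlinarith
      _ = ε := by field_simp
    exact lt_of_le_of_lt h1 h2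
  have hfkA : ∀ k, fk k ∈ A := fun k => ⟨hlipk k, fun q => hxX k q q.2⟩
  have hAcompact : IsCompact A :=
    BoundedContinuousFunction.arzela_ascoli₂ X hX A hAclosed (fun g q hg => hg.2 q) hAequi
  obtain ⟨f, hfA, φ, hφ, hconv⟩ := hAcompact.tendsto_subseq hfkA
  -- the limit function
  set y : ℝ → (Fin n → ℝ) := fun t => f ⟨c t, hcmem t⟩ with hy
  have hylip : LipschitzWith M' y := by
    have h1 : LipschitzWith 1 (fun t : ℝ => (⟨c t, hcmem t⟩ : Icc (0:ℝ) T)) :=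
      LipschitzWith.of_dist_le_mul fun s u => by
        rw [Subtype.dist_eq]
        simpa using hclip.dist_le_mul s u
    have := hfA.1.comp h1
    rw [mul_one] at this
    exact this
  have hyIcc : ∀ t (ht : t ∈ Icc 0 T), y t = f ⟨t, ht⟩ := fun t ht => by
    rw [hy]; exact congrArg f (Subtype.ext (hceq t ht))
  have hyX : ∀ t, y t ∈ X := fun t => hfA.2 _
  -- uniform convergence of the subsequence
  have huniform : ∀ ε > 0, ∀ᶠ j in atTop, ∀ t (ht : t ∈ Icc 0 T),
      dist (x (φ j) t) (y t) < ε := by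
    intro ε hε
    filter_upwards [Metric.tendsto_nhds.mp hconv ε hε] with j hj t ht
    calc dist (x (φ j) t) (y t) = dist (fk (φ j) ⟨t, ht⟩) (f ⟨t, ht⟩) := by
          rw [hfkcoe, hyIcc t ht]
    _ ≤ dist (fk (φ j)) f := BoundedContinuousFunction.dist_coe_le_dist _
    _ < ε := hj
  have hyt : ∀ t, t ∈ Icc 0 T → Tendsto (fun j => x (φ j) t) atTop (𝓝 (y t)) := by
    intro t ht
    rw [Metric.tendsto_atTop]
    intro ε hε
    obtain ⟨N, hN⟩ := Filter.eventually_atTop.1 (huniform ε hε)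
    exact ⟨N, fun j hj => hN j hj t ht⟩
  have htIcc0 : (0:ℝ) ∈ Icc (0:ℝ) T := ⟨le_refl 0, hT⟩
  have htIccT : T ∈ Icc (0:ℝ) T := ⟨hT, le_refl T⟩
  have hy0 : y 0 = a := by
    refine tendsto_nhds_unique (hyt 0 htIcc0) ?_
    simpa [hx0] using (tendsto_const_nhds : Tendsto (fun _ : ℕ => a) atTop (𝓝 a))
  have hyT : y T = p := by
    refine tendsto_nhds_unique (hyt T htIccT) ?_
    have h1 : Tendsto (fun j => b (φ j)) atTop (𝓝 p) := hbp.comp hφ.tendsto_atTop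
    exact h1.congr fun j => (hxT (φ j)).symm
  -- y is a solution
  refine ⟨y, ⟨fun t _ => hyX t, deriv y, ?_, ?_, ?_⟩, hy0, hyT⟩
  · exact fun s _ u _ => lipschitzIntervalIntegrableDeriv hylip s u
  · -- the hard part : a.e. membership of the derivative
    have hnull : ∀ᵐ t : ℝ, t ∉ ({0, T} : Set ℝ) := by
      have h0 : volume ({0, T} : Set ℝ) = 0 := Set.Finite.measure_zero (by simp) volume
      exact (MeasureTheory.measure_eq_zero_iff_ae_notMem).mp h0
    filter_upwards [hylip.ae_differentiableAt (μ := volume), hnull] with t hdiff hne ht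
    have ht0 : (0:ℝ) < t := lt_of_le_of_ne ht.1 fun h => hne (by simp [← h])
    have htT : t < T := lt_of_le_of_ne ht.2 fun h => hne (by simp [h])
    have hytX : y t ∈ X := hyX t
    obtain ⟨hKcomp, hKconv, hKne⟩ := hF.2 (y t) (hXG hytX)
    rw [← hKcomp.isClosed.closure_eq, Metric.mem_closure_iff]
    intro ε hε
    -- the closed convex enlargement S
    set S := F (y t) + Metric.closedBall (0 : Fin n → ℝ) (ε/2) with hS
    have hScl : IsClosed S := (hKcomp.add (isCompact_closedBall _ _)).isClosed
    have hSconv : Convex ℝ S := hKconv.add (convex_closedBall _ _)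
    obtain ⟨δ, hδ, husc⟩ := hF.1 (y t) (hXG hytX) (ε/2) (by positivity)
    set h₀ : ℝ := min (T - t) (δ / (2 * (M + 1))) with hh₀
    have hh₀pos : 0 < h₀ := lt_min (sub_pos.2 htT) (by positivity)
    -- difference quotients of y over [t, t+h] lie in S for 0 < h ≤ h₀
    have claim : ∀ h : ℝ, 0 < h → h ≤ h₀ → h⁻¹ • (y (t + h) - y t) ∈ S := by
      intro h hpos hle
      have hhδ : h ≤ δ / (2 * (M + 1)) := hle.trans (min_le_right _ _)
      have htmem : t ∈ Icc 0 T := ⟨ht0.le, htT.le⟩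
      have hth : t + h ∈ Icc 0 T :=
        ⟨by linarith, by have := hle.trans (min_le_left _ _); linarith⟩
      have hSmem : ∀ᶠ j in atTop, h⁻¹ • (x (φ j) (t + h) - x (φ j) t) ∈ S := by
        filter_upwards [huniform (δ/2) (by positivity)] with j hj
        have hid : x (φ j) (t + h) - x (φ j) t = ∫ τ in t..t + h, v (φ j) τ := by
          rw [hvFTC (φ j) t htmem (t + h) hth]; abel
        have hIoc : volume (Ioc t (t + h)) = ENNReal.ofReal h := by
          rw [Real.volume_Ioc]; congr 1; ring
        have hmem : ∀ᵐ τ ∂(volume.restrict (Ioc t (t + h))), v (φ j) τ ∈ S := by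
          have h1 : ∀ᵐ τ ∂(volume.restrict (Ioc t (t + h))), τ ∈ Ioc t (t + h) :=
            ae_restrict_mem measurableSet_Ioc
          have h2 : ∀ᵐ τ ∂(volume.restrict (Ioc t (t + h))),
              τ ∈ Icc 0 T → v (φ j) τ ∈ F (x (φ j) τ) := ae_restrict_of_ae (hvmem (φ j))
          filter_upwards [h1, h2] with τ hτIoc hτmem
          have hτIcc : τ ∈ Icc 0 T := ⟨by linarith [hτIoc.1], by linarith [hτIoc.2, hth.2]⟩
          have hvF := hτmem hτIcc
          have hd1 : dist (x (φ j) τ) (y τ) < δ/2 := hj τ hτIcc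
          have hd2 : dist (y τ) (y t) ≤ M * h := by
            have h3 := hylip.dist_le_mul τ t
            rw [hM'coe] at h3
            refine h3.trans ?_
            have h4 : dist τ t ≤ h := by
              rw [Real.dist_eq, abs_le]
              constructor <;> [linarith [hτIoc.1]; linarith [hτIoc.2]]
            exact mul_le_mul_of_nonneg_left h4 hM0.le
          have hd3 : dist (x (φ j) τ) (y t) < δ := by
            have h5 : M * h ≤ M * (δ / (2 * (M + 1))) :=
              mul_le_mul_of_nonneg_left hhδ hM0.le
            have h6 : M * (δ / (2 * (M + 1))) < δ / 2 := by
              rw [mul_comm, div_mul_eq_mul_div, div_lt_div_iff₀ (by positivity) two_pos]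
              nlinarith
            calc dist (x (φ j) τ) (y t) ≤ dist (x (φ j) τ) (y τ) + dist (y τ) (y t) :=
                  dist_triangle _ _ _
            _ < δ/2 + M * h := by linarith
            _ ≤ δ/2 + δ/2 := by linarith
            _ = δ := by ring
          obtain ⟨u, hu, hdu⟩ := husc (x (φ j) τ) (hXG (hxX (φ j) τ hτIcc)) hd3 hvF
          rw [hS, Set.mem_add]
          refine ⟨u, hu, v (φ j) τ - u, ?_, by abel⟩
          rw [mem_closedBall_zero_iff, ← dist_eq_norm]
          exact hdu.le
        have hvi : IntegrableOn (v (φ j)) (Ioc t (t + h)) volume := by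
          have h7 := hvint (φ j) t htmem (t + h) hth
          rw [intervalIntegrable_iff, Set.uIoc_of_le (by linarith : t ≤ t + h)] at h7
          exact h7
        have havg := Convex.set_average_mem hSconv hScl
          (by rw [hIoc]; simpa using hpos)
          (by rw [hIoc]; exact ENNReal.ofReal_ne_top) hmem hvi
        rw [setAverage_eq, measureReal_def, hIoc, ENNReal.toReal_ofReal hpos.le] at havg
        rw [hid, intervalIntegral.integral_of_le (by linarith : t ≤ t + h)]
        exact havg
      have hlimj : Tendsto (fun j => h⁻¹ • (x (φ j) (t + h) - x (φ j) t)) atTop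
          (𝓝 (h⁻¹ • (y (t + h) - y t))) :=
        ((hyt (t + h) hth).sub (hyt t htmem)).const_smul _
      exact hScl.mem_of_tendsto hlimj hSmem
    -- the derivative is a limit of such quotients
    have hseq : Tendsto (fun i : ℕ => t + h₀ / (i + 1)) atTop (𝓝[≠] t) := by
      apply tendsto_nhdsWithin_of_tendsto_nhds_of_eventually_within
      · have h8 : Tendsto (fun i : ℕ => h₀ / (i + 1)) atTop (𝓝 0) := by
          have := tendsto_one_div_add_atTop_nhds_zero_nat (𝕜 := ℝ)
          have h9 := this.const_mul h₀
          simpa [div_eq_mul_inv, mul_comm, mul_one_div] using h9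
        simpa using (tendsto_const_nhds (x := t)).add h8
      · refine Eventually.of_forall fun i => ?_
        have : (0:ℝ) < h₀ / (i + 1) := by positivity
        simp only [mem_compl_singleton_iff]
        exact ne_of_gt (by linarith)
    have hqlim : Tendsto (fun i : ℕ => (h₀ / (i + 1))⁻¹ • (y (t + h₀ / (i + 1)) - y t))
        atTop (𝓝 (deriv y t)) := by
      have h10 : Tendsto (slope y t) (𝓝[≠] t) (𝓝 (deriv y t)) :=
        hasDerivAt_iff_tendsto_slope.1 hdiff.hasDerivAt
      refine (h10.comp hseq).congr fun i => ?_
      simp [slope_def_module, add_sub_cancel_left]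
    have hdS : deriv y t ∈ S := by
      refine hScl.mem_of_tendsto hqlim (Eventually.of_forall fun i => ?_)
      refine claim _ (by positivity) ?_
      rw [div_le_iff₀ (by positivity)]
      nlinarith [hh₀pos, (Nat.cast_nonneg (α := ℝ) i)]
    rw [hS, Set.mem_add] at hdS
    obtain ⟨u, hu, w, hw, huw⟩ := hdS
    refine ⟨u, hu, ?_⟩
    rw [mem_closedBall_zero_iff] at hw
    rw [← huw, dist_eq_norm]
    calc ‖u + w - u‖ = ‖w‖ := by rw [show u + w - u = w from by abel]
    _ ≤ ε/2 := hw
    _ < ε := by linarith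
  · exact fun s _ u _ => lipschitzFTC hylip s u
end

section
/- Let S be a compact invariant set for the multiflow Φ of a differential inclusion. If U ⊂ S satisfies ω_S(U) ⊂ U, then the maximal invariant subset of U equals ω_S(U): Inv(U) = ω_S(U). -/
open Set MeasureTheory Filter Topology

open DIncl Set MeasureTheory Filter Topology



section FTC

/-- Stieltjes function from a continuous monotone function. -/
noncomputable def stj (g : ℝ → ℝ) (hg : Monotone g) (hgc : Continuous g) : StieltjesFunction ℝ :=
  ⟨g, hg, fun _ => hgc.continuousAt.continuousWithinAt⟩

lemma stj_measure_Ioc (g : ℝ → ℝ) (hg : Monotone g) (hgc : Continuous g) (a b : ℝ) :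
    (stj g hg hgc).measure (Ioc a b) = ENNReal.ofReal (g b - g a) :=
  StieltjesFunction.measure_Ioc _ _ _

lemma lipschitz_ftc_real {M : NNReal} {f : ℝ → ℝ} (hf : LipschitzWith M f) {a b : ℝ}
    (hab : a ≤ b) : ∫ t in a..b, deriv f t = f b - f a := by
  set c : ℝ := 2 * M with hc
  have hM0 : (0:ℝ) ≤ M := M.coe_nonneg
  have hlip : ∀ s t : ℝ, |f t - f s| ≤ M * |t - s| := by
    intro s t
    have := hf.dist_le_mul t s
    simpa [Real.dist_eq] using this
  set g : ℝ → ℝ := fun t => f t + M * t with hgdef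
  have hgmono : Monotone g := by
    intro s t hst
    have h1 := (abs_le.1 (hlip s t)).1
    have : |t - s| = t - s := abs_of_nonneg (by linarith)
    simp only [g]
    nlinarith [this, h1, hM0]
  have hgcont : Continuous g := (hf.continuous).add (continuous_const.mul continuous_id)
  set h : ℝ → ℝ := fun t => c * t - g t with hhdef
  have hhmono : Monotone h := by
    intro s t hst
    have h1 := (abs_le.1 (hlip s t)).2
    have habs : |t - s| = t - s := abs_of_nonneg (by linarith)
    simp only [h, g, c]
    nlinarith [habs, h1, hM0]
  have hhcont : Continuous h := (continuous_const.mul continuous_id).sub hgcont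
  set G := stj g hgmono hgcont with hG
  set H := stj h hhmono hhcont with hH
  -- G.measure + H.measure = c • volume
  haveI : IsLocallyFiniteMeasure (G.measure + H.measure) := by
    constructor; intro x
    obtain ⟨s, hs, h1⟩ := G.measure.finiteAt_nhds x
    obtain ⟨t, ht, h2⟩ := H.measure.finiteAt_nhds x
    refine ⟨s ∩ t, inter_mem hs ht, ?_⟩
    rw [Measure.add_apply]
    exact ENNReal.add_lt_top.2 ⟨lt_of_le_of_lt (measure_mono inter_subset_left) h1,
      lt_of_le_of_lt (measure_mono inter_subset_right) h2⟩
  have hsum : G.measure + H.measure = (ENNReal.ofReal c) • volume := by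
    refine Measure.ext_of_Ioc _ _ (fun s t hst => ?_)
    have h1 : G.measure (Ioc s t) = ENNReal.ofReal (g t - g s) := stj_measure_Ioc _ _ _ _ _
    have h2 : H.measure (Ioc s t) = ENNReal.ofReal (h t - h s) := stj_measure_Ioc _ _ _ _ _
    have h3 : ((ENNReal.ofReal c) • volume) (Ioc s t) = ENNReal.ofReal (c * (t - s)) := by
      rw [Measure.smul_apply, Real.volume_Ioc, smul_eq_mul,
        ← ENNReal.ofReal_mul (by positivity)]
    rw [Measure.add_apply, h1, h2, h3, ← ENNReal.ofReal_add (by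
        have := hgmono hst.le; linarith) (by have := hhmono hst.le; linarith)]
    congr 1; simp only [h]; ring
  have hle : G.measure ≤ (ENNReal.ofReal c) • volume := by
    rw [← hsum]; exact Measure.le_add_right le_rfl
  have hac : G.measure ≪ volume := by
    refine Measure.AbsolutelyContinuous.mk (fun s hs h0 => ?_)
    have := hle s
    simp [Measure.smul_apply, h0] at this
    exact this
  set ρ := G.measure.rnDeriv volume with hρ
  have hwd : volume.withDensity ρ = G.measure := Measure.withDensity_rnDeriv_eq _ _ hac
  have hρmeas : Measurable ρ := Measure.measurable_rnDeriv _ _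
  have hρlt : ∀ᵐ x, ρ x < ⊤ := Measure.rnDeriv_lt_top _ _
  have hkey : ∫ t in Ioc a b, (ρ t).toReal = g b - g a := by
    have h1 : ∫⁻ t in Ioc a b, ρ t = G.measure (Ioc a b) := by
      rw [← withDensity_apply ρ measurableSet_Ioc, hwd]
    have h2 : ∫ t in Ioc a b, (ρ t).toReal =
        (∫⁻ t in Ioc a b, ρ t).toReal :=
      integral_toReal (hρmeas.aemeasurable) (ae_restrict_of_ae hρlt)
    rw [h2, h1, stj_measure_Ioc, ENNReal.toReal_ofReal (by have := hgmono hab; linarith)]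
  have hint : IntegrableOn (fun t => (ρ t).toReal) (Ioc a b) := by
    refine integrable_toReal_of_lintegral_ne_top hρmeas.aemeasurable ?_
    rw [← withDensity_apply ρ measurableSet_Ioc, hwd]
    exact (stj_measure_Ioc _ _ _ _ _ ▸ ENNReal.ofReal_ne_top)
  have hderivg : ∀ᵐ x, HasDerivAt g ((ρ x).toReal) x := G.ae_hasDerivAt
  have hderivf : ∀ᵐ x, HasDerivAt f ((ρ x).toReal - M) x := by
    filter_upwards [hderivg] with x hx
    have h2 : HasDerivAt (fun t : ℝ => (M:ℝ) * t) (M:ℝ) x := by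
      simpa using (hasDerivAt_id x).const_mul (M:ℝ)
    have h3 := hx.sub h2
    have : f = fun t => g t - M * t := by funext t; simp [g]
    rw [this]
    exact h3
  have hcongr : ∀ᵐ x, deriv f x = (ρ x).toReal - M := by
    filter_upwards [hderivf] with x hx using hx.deriv
  calc ∫ t in a..b, deriv f t = ∫ t in a..b, ((ρ t).toReal - M) := by
        refine intervalIntegral.integral_congr_ae ?_
        filter_upwards [hcongr] with x hx _ using hx
    _ = (∫ t in a..b, (ρ t).toReal) - ∫ t in a..b, (M:ℝ) := by
        rw [intervalIntegral.integral_sub]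
        · exact (intervalIntegrable_iff_integrableOn_Ioc_of_le hab).2 hint
        · exact intervalIntegrable_const
    _ = (g b - g a) - M * (b - a) := by
        rw [intervalIntegral.integral_of_le hab, hkey, intervalIntegral.integral_const]
        simp [smul_eq_mul, mul_comm]
    _ = f b - f a := by simp [g]; ring

end FTC

section VFTC
variable {n : ℕ}

lemma norm_deriv_le_lip {M : NNReal} {f : ℝ → (Fin n → ℝ)} (hf : LipschitzWith M f) (t : ℝ) :
    ‖deriv f t‖ ≤ M := by
  by_cases h : DifferentiableAt ℝ f t
  · have hb := norm_fderiv_le_of_lipschitz ℝ hf (x₀ := t)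
    calc ‖deriv f t‖ = ‖fderiv ℝ f t 1‖ := by
          rw [← fderiv_apply_one_eq_deriv]
      _ ≤ ‖fderiv ℝ f t‖ * ‖(1:ℝ)‖ := (fderiv ℝ f t).le_opNorm 1
      _ ≤ M * 1 := by rw [norm_one]; exact mul_le_mul_of_nonneg_right hb zero_le_one
      _ = M := mul_one _
  · rw [deriv_zero_of_not_differentiableAt h]; simp

lemma deriv_intervalIntegrable_lip {M : NNReal} {f : ℝ → (Fin n → ℝ)} (hf : LipschitzWith M f)
    (a b : ℝ) : IntervalIntegrable (deriv f) volume a b := by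
  have hm : Measurable (deriv f) := measurable_deriv f
  constructor <;>
  · refine ⟨hm.aestronglyMeasurable.restrict, ?_⟩
    refine (HasFiniteIntegral.restrict_of_bounded (C := M) measure_Ioc_lt_top) ?_
    exact ae_restrict_of_ae (Eventually.of_forall fun t => norm_deriv_le_lip hf t)

lemma lipschitz_ftc {M : NNReal} {f : ℝ → (Fin n → ℝ)} (hf : LipschitzWith M f) (a b : ℝ) :
    f b = f a + ∫ t in a..b, deriv f t := by
  have key : ∀ s t : ℝ, s ≤ t → f t = f s + ∫ r in s..t, deriv f r := by
    intro s t hst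
    have hdiff := hf.ae_differentiableAt_real
    funext i
    have hproji : LipschitzWith 1 (fun v : Fin n → ℝ => v i) :=
      LipschitzWith.of_dist_le_mul fun x y => by simpa using dist_le_pi_dist x y i
    have hfi : LipschitzWith (1 * M) (fun r => f r i) := hproji.comp hf
    rw [one_mul] at hfi
    have hae : ∀ᵐ r, deriv (fun r => f r i) r = deriv f r i := by
      filter_upwards [hdiff] with r hr
      have h1 : HasDerivAt f (deriv f r) r := hr.hasDerivAt
      have h2 : HasDerivAt (fun r => f r i) (deriv f r i) r := by
        have := ((ContinuousLinearMap.proj (R := ℝ) (φ := fun _ : Fin n => ℝ) i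
          ).hasFDerivAt (x := f r)).comp_hasDerivAt r h1
        exact hasDerivAt_pi.1 h1 i
      exact h2.deriv
    have hscalar := lipschitz_ftc_real hfi hst
    have h3 : ∫ r in s..t, deriv (fun r => f r i) r = ∫ r in s..t, deriv f r i := by
      refine intervalIntegral.integral_congr_ae ?_
      filter_upwards [hae] with r hr _ using hr
    have h4 : (∫ r in s..t, deriv f r) i = ∫ r in s..t, deriv f r i := by
      have := (ContinuousLinearMap.proj (R := ℝ) (φ := fun _ : Fin n => ℝ) i
        ).intervalIntegral_comp_comm (deriv_intervalIntegrable_lip hf s t)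
      simpa using this.symm
    have : f t i - f s i = ∫ r in s..t, deriv f r i := by rw [← h3, hscalar]
    simp only [Pi.add_apply, h4]
    linarith [this]
  rcases le_total a b with h | h
  · exact key a b h
  · have h1 := key b a h
    rw [intervalIntegral.integral_symm]
    rw [h1]
    abel

end VFTC
namespace DIncl

section Sol
variable {n : ℕ} {F : (Fin n → ℝ) → Set (Fin n → ℝ)} {X S U : Set (Fin n → ℝ)}

/-- A global bound on `F` over a compact set. -/
lemma exists_bound (hX : IsCompact X) (hF : FilippovOn F X) :
    ∃ M : NNReal, ∀ x ∈ X, ∀ w ∈ F x, ‖w‖ ≤ M := by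
  classical
  -- for each x, a radius bounding F x and a δ for USC with ε = 1
  have key : ∀ x ∈ X, ∃ δ > 0, ∃ R : ℝ, ∀ y ∈ X, dist y x < δ → ∀ w ∈ F y, ‖w‖ ≤ R := by
    intro x hx
    obtain ⟨hcomp, -, -⟩ := hF.2 x hx
    obtain ⟨R, hR⟩ := hcomp.isBounded.subset_closedBall 0
    obtain ⟨δ, hδ, hUSC⟩ := hF.1 x hx 1 one_pos
    refine ⟨δ, hδ, R + 1, fun y hy hdy w hw => ?_⟩
    obtain ⟨u, hu, hdu⟩ := hUSC y hy hdy hw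
    have : ‖u‖ ≤ R := by simpa [Metric.mem_closedBall, dist_eq_norm] using hR hu
    have h2 : dist w u < 1 := hdu
    calc ‖w‖ ≤ ‖w - u‖ + ‖u‖ := by
          simpa using norm_add_le (w - u) u
      _ ≤ R + 1 := by rw [← dist_eq_norm] at *; linarith
  choose! δ hδ R hR using key
  obtain ⟨t, hts, hcov⟩ := hX.elim_nhds_subcover (fun x => Metric.ball x (δ x))
    (fun x hx => Metric.ball_mem_nhds x (hδ x hx))
  set C : ℝ := (t.image R).fold max 0 id with hC
  have hCle : ∀ x ∈ t, R x ≤ C := by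
    intro x hx
    exact (Finset.le_fold_max _).2 (Or.inr ⟨R x, Finset.mem_image_of_mem R hx, le_rfl⟩)
  refine ⟨⟨max C 0, le_max_right _ _⟩, fun x hx w hw => ?_⟩
  obtain ⟨c, hct, hxc⟩ := by
    have := hcov hx
    simpa using this
  have := hR c (hts c hct) x hx (by simpa [Metric.mem_ball] using hxc) w hw
  have h2 := hCle c hct
  calc ‖w‖ ≤ R c := this
    _ ≤ C := h2
    _ ≤ max C 0 := le_max_left _ _

/-- Enlarging the ambient set preserves solutions. -/
lemma IsSolOn.mono_set {x : ℝ → Fin n → ℝ} {I : Set ℝ} (h : IsSolOn F U x I) (hUS : U ⊆ S) :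
    IsSolOn F S x I :=
  ⟨fun t ht => hUS (h.1 t ht), h.2⟩

/-- Restricting the time set preserves solutions. -/
lemma IsSolOn.mono_time {x : ℝ → Fin n → ℝ} {I J : Set ℝ} (h : IsSolOn F S x I) (hJI : J ⊆ I) :
    IsSolOn F S x J := by
  obtain ⟨hval, v, hi, hmem, hrep⟩ := h
  exact ⟨fun t ht => hval t (hJI ht), v, fun a ha b hb => hi a (hJI ha) b (hJI hb),
    hmem.mono (fun t ht htJ => ht (hJI htJ)), fun a ha b hb => hrep a (hJI ha) b (hJI hb)⟩

/-- Solutions only depend on values on the time set. -/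
lemma IsSolOn.congr {x y : ℝ → Fin n → ℝ} {I : Set ℝ} (h : IsSolOn F S x I)
    (hxy : Set.EqOn x y I) : IsSolOn F S y I := by
  obtain ⟨hval, v, hi, hmem, hrep⟩ := h
  refine ⟨fun t ht => hxy ht ▸ hval t ht, v, hi, hmem.mono (fun t ht htI => ?_),
    fun a ha b hb => ?_⟩
  · rw [← hxy htI]; exact ht htI
  · rw [← hxy ha, ← hxy hb]; exact hrep a ha b hb

/-- Time translation of a solution. -/
lemma IsSolOn.shift {x : ℝ → Fin n → ℝ} {I : Set ℝ} (h : IsSolOn F S x I) (c : ℝ) :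
    IsSolOn F S (fun s => x (s + c)) {s | s + c ∈ I} := by
  obtain ⟨hval, v, hi, hmem, hrep⟩ := h
  refine ⟨fun t ht => hval _ ht, fun s => v (s + c), fun a ha b hb => ?_, ?_, fun a ha b hb => ?_⟩
  · have := (hi (a + c) ha (b + c) hb).comp_add_right c
    simpa using this
  · have : volume {s : ℝ | ¬ (s + c ∈ I → v (s + c) ∈ F (x (s + c)))} = 0 := by
      have h0 : volume {t : ℝ | ¬ (t ∈ I → v t ∈ F (x t))} = 0 := hmem
      have : {s : ℝ | ¬ (s + c ∈ I → v (s + c) ∈ F (x (s + c)))} =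
          (fun h => h + c) ⁻¹' {t : ℝ | ¬ (t ∈ I → v t ∈ F (x t))} := rfl
      rw [this, measure_preimage_add_right, h0]
    exact this
  · have := hrep (a + c) ha (b + c) hb
    simpa [intervalIntegral.integral_comp_add_right (fun t => v t) c] using this

/-- Solutions are `M`-Lipschitz on order-connected time sets. -/
lemma IsSolOn.lipschitzOnWith {M : NNReal} {x : ℝ → Fin n → ℝ} {I : Set ℝ}
    (h : IsSolOn F S x I) (hI : I.OrdConnected) (hSX : S ⊆ X)
    (hM : ∀ y ∈ X, ∀ w ∈ F y, ‖w‖ ≤ M) : LipschitzOnWith M x I := by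
  obtain ⟨hval, v, hi, hmem, hrep⟩ := h
  rw [lipschitzOnWith_iff_dist_le_mul]
  intro s hs t ht
  have hsub : Set.uIcc t s ⊆ I := hI.uIcc_subset ht hs
  have heq : x s - x t = ∫ r in t..s, v r := by
    rw [hrep t ht s hs]; abel
  rw [dist_eq_norm, heq]
  have hb : ‖∫ r in t..s, v r‖ ≤ (M : ℝ) * |s - t| := by
    refine intervalIntegral.norm_integral_le_of_norm_le_const_ae ?_
    filter_upwards [hmem] with r hr
    intro hrI
    have hrI' : r ∈ I := hsub (Set.Ioc_subset_Icc_self hrI)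
    exact hM _ (hSX (hval r hrI')) _ (hr hrI')
  calc ‖∫ r in t..s, v r‖ ≤ (M:ℝ) * |s - t| := hb
    _ = (M:ℝ) * dist s t := by rw [Real.dist_eq]

end Sol

section Concat
variable {n : ℕ} {F : (Fin n → ℝ) → Set (Fin n → ℝ)} {S : Set (Fin n → ℝ)}

/-- Two solution certificates on adjacent intervals concatenate. -/
lemma IsSolOn.concat {z : ℝ → Fin n → ℝ} {a c b : ℝ} (hac : a ≤ c) (hcb : c ≤ b)
    (h₁ : IsSolOn F S z (Icc a c)) (h₂ : IsSolOn F S z (Icc c b)) :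
    IsSolOn F S z (Icc a b) := by
  obtain ⟨hval₁, v₁, hi₁, hmem₁, hrep₁⟩ := h₁
  obtain ⟨hval₂, v₂, hi₂, hmem₂, hrep₂⟩ := h₂
  set w : ℝ → Fin n → ℝ := fun t => if t ≤ c then v₁ t else v₂ t with hw
  have hw1 : ∀ {s t : ℝ}, s ≤ c → t ≤ c → Set.EqOn v₁ w (Set.uIoc s t) := by
    intro s t hsc htc r hr
    exact (if_pos (((Set.uIoc_subset_uIcc hr).2 : r ≤ max s t).trans (max_le hsc htc))).symm
  have hw2 : ∀ {s t : ℝ}, c ≤ s → c ≤ t → Set.EqOn v₂ w (Set.uIoc s t) := by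
    intro s t hcs hct r hr
    have : min s t < r := hr.1
    exact (if_neg (not_le.2 (lt_of_le_of_lt (le_min hcs hct) this))).symm
  have hcmem : c ∈ Icc a b := ⟨hac, hcb⟩
  -- integrability
  have hint_c : ∀ s ∈ Icc a b, IntervalIntegrable w volume s c := by
    intro s hs
    by_cases hsc : s ≤ c
    · refine ⟨(hi₁ s ⟨hs.1, hsc⟩ c ⟨hac, le_rfl⟩).1.congr_fun ?_ measurableSet_Ioc,
        (hi₁ s ⟨hs.1, hsc⟩ c ⟨hac, le_rfl⟩).2.congr_fun ?_ measurableSet_Ioc⟩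
      · exact fun r hr => hw1 hsc le_rfl (Set.Ioc_subset_uIoc hr)
      · exact fun r hr => hw1 hsc le_rfl (Set.Ioc_subset_uIoc' hr)
    · push_neg at hsc
      refine ⟨(hi₂ s ⟨hsc.le, hs.2⟩ c ⟨le_rfl, hcb⟩).1.congr_fun ?_ measurableSet_Ioc,
        (hi₂ s ⟨hsc.le, hs.2⟩ c ⟨le_rfl, hcb⟩).2.congr_fun ?_ measurableSet_Ioc⟩
      · exact fun r hr => hw2 hsc.le le_rfl (Set.Ioc_subset_uIoc hr)
      · exact fun r hr => hw2 hsc.le le_rfl (Set.Ioc_subset_uIoc' hr)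
  have hint : ∀ s ∈ Icc a b, ∀ t ∈ Icc a b, IntervalIntegrable w volume s t :=
    fun s hs t ht => (hint_c s hs).trans ((hint_c t ht).symm)
  -- integral representation
  have hrep : ∀ s ∈ Icc a b, ∀ t ∈ Icc a b, z t = z s + ∫ r in s..t, w r := by
    have key : ∀ s ∈ Icc a b, z c = z s + ∫ r in s..c, w r := by
      intro s hs
      by_cases hsc : s ≤ c
      · rw [intervalIntegral.integral_congr_ae (Eventually.of_forall
          (fun r hr => (hw1 hsc le_rfl hr).symm))]
        exact hrep₁ s ⟨hs.1, hsc⟩ c ⟨hac, le_rfl⟩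
      · push_neg at hsc
        rw [intervalIntegral.integral_congr_ae (Eventually.of_forall
          (fun r hr => (hw2 hsc.le le_rfl hr).symm))]
        exact hrep₂ s ⟨hsc.le, hs.2⟩ c ⟨le_rfl, hcb⟩
    intro s hs t ht
    have h1 := key s hs
    have h2 := key t ht
    have h3 : ∫ r in s..t, w r = (∫ r in s..c, w r) + ∫ r in c..t, w r :=
      (intervalIntegral.integral_add_adjacent_intervals (hint_c s hs)
        ((hint_c t ht).symm)).symm
    have h4 : ∫ r in c..t, w r = - ∫ r in t..c, w r := by
      rw [intervalIntegral.integral_symm]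
    rw [h3, h4]
    rw [h1] at h2
    -- h2 : z s + ∫ s..c = z t + ∫ t..c
    have : z t = z s + ((∫ r in s..c, w r) - ∫ r in t..c, w r) := by
      rw [eq_comm] at h2
      have := h2
      abel_nf
      abel_nf at this
      linear_combination (norm := module) this
    rw [this]; abel
  -- a.e. membership
  have hmem : ∀ᵐ t, t ∈ Icc a b → w t ∈ F (z t) := by
    filter_upwards [hmem₁, hmem₂] with t h1 h2 ht
    by_cases htc : t ≤ c
    · rw [hw]; simp only [if_pos htc]; exact h1 ⟨ht.1, htc⟩
    · rw [hw]; simp only [if_neg htc]; exact h2 ⟨(not_le.1 htc).le, ht.2⟩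
  refine ⟨fun t ht => ?_, w, hint, hmem, hrep⟩
  by_cases htc : t ≤ c
  · exact hval₁ t ⟨ht.1, htc⟩
  · exact hval₂ t ⟨(not_le.1 htc).le, ht.2⟩

end Concat

section Limit
open Pointwise
variable {n : ℕ} {F : (Fin n → ℝ) → Set (Fin n → ℝ)} {X S : Set (Fin n → ℝ)}

lemma usc_shrink (hF : FilippovOn F X) {x₀ : Fin n → ℝ} (hx₀ : x₀ ∈ X) {z : Fin n → ℝ}
    (hz : ∀ δ > 0, z ∈ closure (convexHull ℝ (⋃ y ∈ X ∩ Metric.closedBall x₀ δ, F y))) :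
    z ∈ F x₀ := by
  obtain ⟨hcomp, hconv, hne⟩ := hF.2 x₀ hx₀
  have key : ∀ ε > 0, Metric.infDist z (F x₀) ≤ 2 * ε := by
    intro ε hε
    obtain ⟨δ, hδ, hUSC⟩ := hF.1 x₀ hx₀ ε hε
    set N : Set (Fin n → ℝ) := F x₀ + Metric.ball (0 : Fin n → ℝ) ε with hN
    have hNconv : Convex ℝ N := hconv.add (convex_ball (0 : Fin n → ℝ) ε)
    have hsub : (⋃ y ∈ X ∩ Metric.closedBall x₀ (δ/2), F y) ⊆ N := by
      rintro w hw
      simp only [Set.mem_iUnion] at hw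
      obtain ⟨y, ⟨hyX, hyb⟩, hwF⟩ := hw
      have : dist y x₀ < δ := lt_of_le_of_lt (Metric.mem_closedBall.1 hyb) (by linarith)
      obtain ⟨u, hu, hdu⟩ := hUSC y hyX this hwF
      exact ⟨u, hu, w - u, by simpa [Metric.mem_ball, dist_eq_norm] using hdu, by module⟩
    have hzN : z ∈ closure N :=
      closure_mono (convexHull_min hsub hNconv) (hz (δ/2) (by linarith))
    obtain ⟨w, hwN, hdzw⟩ := Metric.mem_closure_iff.1 hzN ε hε
    obtain ⟨u, hu, r, hr, hwur⟩ := hwN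
    have : dist w u < ε := by
      rw [dist_eq_norm, ← hwur]
      simpa using Metric.mem_ball.1 hr |>.trans_le (by simp [dist_eq_norm])
    calc Metric.infDist z (F x₀) ≤ dist z u := Metric.infDist_le_dist_of_mem hu
      _ ≤ dist z w + dist w u := dist_triangle _ _ _
      _ ≤ 2 * ε := by linarith
  have h0 : Metric.infDist z (F x₀) = 0 := by
    by_contra h
    have hpos : 0 < Metric.infDist z (F x₀) :=
      lt_of_le_of_ne Metric.infDist_nonneg (Ne.symm h)
    have := key (Metric.infDist z (F x₀) / 4) (by linarith)
    linarith
  exact (hcomp.isClosed.mem_iff_infDist_zero hne).2 h0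

lemma lip_of_ptwise {M : NNReal} {ψk : ℕ → ℝ → Fin n → ℝ} {ψ : ℝ → Fin n → ℝ}
    (hlip : ∀ k, LipschitzWith M (ψk k))
    (hpt : ∀ t, Tendsto (fun k => ψk k t) atTop (𝓝 (ψ t))) : LipschitzWith M ψ := by
  refine LipschitzWith.of_dist_le_mul fun a b => ?_
  refine le_of_tendsto ((hpt a).dist (hpt b)) (Eventually.of_forall fun k => ?_)
  exact (hlip k).dist_le_mul a b

lemma unif_of_ptwise {M : NNReal} {ψk : ℕ → ℝ → Fin n → ℝ} {ψ : ℝ → Fin n → ℝ}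
    (hlip : ∀ k, LipschitzWith M (ψk k))
    (hpt : ∀ t, Tendsto (fun k => ψk k t) atTop (𝓝 (ψ t)))
    (s t : ℝ) {ε : ℝ} (hε : 0 < ε) :
    ∀ᶠ k in atTop, ∀ r ∈ Icc s t, dist (ψk k r) (ψ r) ≤ ε := by
  have hψlip : LipschitzWith M ψ := lip_of_ptwise hlip hpt
  rcases lt_or_ge t s with hts | hst
  · exact Eventually.of_forall fun k r hr => absurd (hr.1.trans hr.2) (not_le.2 hts)
  set η : ℝ := ε / (3 * (M + 1)) with hη
  have hMpos : (0:ℝ) < M + 1 := by positivity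
  have hηpos : 0 < η := by positivity
  obtain ⟨N, hN⟩ := exists_nat_ge ((t - s) / η)
  have hgrid : ∀ᶠ k in atTop, ∀ i ∈ Finset.range (N + 1),
      dist (ψk k (s + i * η)) (ψ (s + i * η)) < ε / 3 := by
    rw [Filter.eventually_all_finset]
    intro i _
    obtain ⟨K, hK⟩ := Metric.tendsto_atTop.1 (hpt (s + i * η)) (ε/3) (by positivity)
    exact eventually_atTop.2 ⟨K, fun k hk => hK k hk⟩
  filter_upwards [hgrid] with k hk r hr
  set i : ℕ := ⌊(r - s) / η⌋₊ with hi
  have hrs : 0 ≤ r - s := by linarith [hr.1]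
  have hile : (i : ℝ) ≤ (r - s) / η := Nat.floor_le (by positivity)
  have hilt : (r - s) / η < i + 1 := Nat.lt_floor_add_one _
  have hiN : i ∈ Finset.range (N + 1) := by
    refine Finset.mem_range.2 (Nat.lt_succ_of_le ?_)
    have h1 : (r - s) / η ≤ (t - s) / η := by
      gcongr
      linarith [hr.2]
    exact Nat.floor_le_of_le (h1.trans hN)
  set p : ℝ := s + i * η with hp
  have hA : (i:ℝ) * η ≤ r - s := by
    have := (le_div_iff₀ hηpos).1 hile
    linarith
  have hB : r - s < ((i:ℝ) + 1) * η := by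
    have := (div_lt_iff₀ hηpos).1 hilt
    linarith
  have hdist_rp : dist r p ≤ η := by
    rw [Real.dist_eq, abs_le]
    constructor
    · simp only [p]; nlinarith [hηpos.le]
    · simp only [p]; nlinarith
  have hMη : (M:ℝ) * η ≤ ε / 3 := by
    have hM0 : (0:ℝ) ≤ M := M.coe_nonneg
    have heq : (M:ℝ) * η = ((M:ℝ) * ε) / (3 * (M + 1)) := by rw [hη]; ring
    rw [heq, div_le_div_iff₀ (by positivity) (by norm_num : (0:ℝ) < 3)]
    nlinarith
  have h1 : dist (ψk k r) (ψk k p) ≤ M * η :=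
    le_trans ((hlip k).dist_le_mul r p) (mul_le_mul_of_nonneg_left hdist_rp M.coe_nonneg)
  have h2 : dist (ψ p) (ψ r) ≤ M * η := by
    refine le_trans (hψlip.dist_le_mul p r) ?_
    rw [dist_comm]
    exact mul_le_mul_of_nonneg_left hdist_rp M.coe_nonneg
  have h3 : dist (ψk k p) (ψ p) < ε / 3 := hk i hiN
  calc dist (ψk k r) (ψ r) ≤ dist (ψk k r) (ψk k p) + dist (ψk k p) (ψ p) + dist (ψ p) (ψ r) :=
        dist_triangle4 _ _ _ _
    _ ≤ M * η + ε/3 + M * η := by linarith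
    _ ≤ ε := by linarith

/-- Derivatives of a pointwise limit of solutions lie in `F`. -/
lemma deriv_mem_of_lim (hF : FilippovOn F X) (hSX : S ⊆ X) (hSc : IsClosed S)
    {M : NNReal} {ψk : ℕ → ℝ → Fin n → ℝ} {ψ : ℝ → Fin n → ℝ}
    (hlip : ∀ k, LipschitzWith M (ψk k))
    (hpt : ∀ t, Tendsto (fun k => ψk k t) atTop (𝓝 (ψ t)))
    (hsol : ∀ s t : ℝ, s < t → ∀ᶠ k in atTop, IsSolOn F S (ψk k) (Icc s t)) :
    (∀ r, ψ r ∈ S) ∧ ∀ t : ℝ, DifferentiableAt ℝ ψ t → deriv ψ t ∈ F (ψ t) := by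
  have hψS : ∀ r, ψ r ∈ S := by
    intro r
    refine hSc.mem_of_tendsto (hpt r) ?_
    filter_upwards [hsol (r - 1) (r + 1) (by linarith)] with k hk
    exact hk.1 r ⟨by linarith, by linarith⟩
  refine ⟨hψS, fun t hdiff => ?_⟩
  refine usc_shrink hF (hSX (hψS t)) (fun δ hδ => ?_)
  set C := closure (convexHull ℝ (⋃ y ∈ X ∩ Metric.closedBall (ψ t) δ, F y)) with hC
  have hCclosed : IsClosed C := isClosed_closure
  have hψlip : LipschitzWith M ψ := lip_of_ptwise hlip hpt
  set h₀ : ℝ := δ / (2 * (M + 1)) with hh₀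
  have hh₀pos : 0 < h₀ := by positivity
  -- slopes lie in C
  have hslope : ∀ t' : ℝ, t < t' → t' - t < h₀ → (t' - t)⁻¹ • (ψ t' - ψ t) ∈ C := by
    intro t' htt' hsmall
    have hMh : (M:ℝ) * (t' - t) ≤ δ / 2 := by
      have h1 : (M:ℝ) * (t' - t) ≤ (M:ℝ) * h₀ :=
        mul_le_mul_of_nonneg_left hsmall.le M.coe_nonneg
      have h2 : (M:ℝ) * h₀ ≤ δ / 2 := by
        have hM0 : (0:ℝ) ≤ M := M.coe_nonneg
        have heq : (M:ℝ) * h₀ = ((M:ℝ) * δ) / (2 * (M + 1)) := by rw [hh₀]; ring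
        rw [heq, div_le_div_iff₀ (by positivity) (by norm_num : (0:ℝ) < 2)]
        nlinarith
      linarith
    have hev : ∀ᶠ k in atTop, (t' - t)⁻¹ • (ψk k t' - ψk k t) ∈ C := by
      filter_upwards [hsol t t' htt', unif_of_ptwise hlip hpt t t'
        (show (0:ℝ) < δ/2 by linarith)] with k hsk hunif
      obtain ⟨hval, v, hi, hmem, hrep⟩ := hsk
      have hvA : ∀ᵐ r ∂(volume.restrict (Ioc t t')), v r ∈
          (⋃ y ∈ X ∩ Metric.closedBall (ψ t) δ, F y) := by
        rw [ae_restrict_iff' measurableSet_Ioc]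
        filter_upwards [hmem] with r hm hr
        have hrI : r ∈ Icc t t' := ⟨hr.1.le, hr.2⟩
        have h1 : ψk k r ∈ X := hSX (hval r hrI)
        have h2 : dist (ψk k r) (ψ t) ≤ δ := by
          have ha := hunif r hrI
          have hb : dist (ψ r) (ψ t) ≤ (M:ℝ) * (t' - t) := by
            refine le_trans (hψlip.dist_le_mul r t) ?_
            refine mul_le_mul_of_nonneg_left ?_ M.coe_nonneg
            rw [Real.dist_eq, abs_le]
            constructor <;> [linarith [hrI.1]; linarith [hrI.2]]
          calc dist (ψk k r) (ψ t) ≤ dist (ψk k r) (ψ r) + dist (ψ r) (ψ t) :=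
                dist_triangle _ _ _
            _ ≤ δ/2 + δ/2 := by linarith
            _ = δ := by ring
        exact Set.mem_iUnion₂.2 ⟨ψk k r, ⟨h1, Metric.mem_closedBall.2 h2⟩, hm hrI⟩
      have hCconv : Convex ℝ C := (convex_convexHull ℝ _).closure
      have hInt : IntegrableOn v (Ioc t t') volume :=
        (intervalIntegrable_iff_integrableOn_Ioc_of_le htt'.le).1
          (hi t ⟨le_rfl, htt'.le⟩ t' ⟨htt'.le, le_rfl⟩)
      have havg : ⨍ r in Ioc t t', v r ∈ C := by
        refine hCconv.set_average_mem hCclosed ?_ ?_ ?_ hInt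
        · rw [Real.volume_Ioc]
          simp only [ne_eq, ENNReal.ofReal_eq_zero, not_le]
          linarith
        · exact (measure_Ioc_lt_top).ne
        · exact hvA.mono (fun r hr => subset_closure (subset_convexHull ℝ _ hr))
      have heq : ⨍ r in Ioc t t', v r = (t' - t)⁻¹ • (ψk k t' - ψk k t) := by
        rw [setAverage_eq, Real.volume_real_Ioc_of_le (by linarith)]
        congr 1
        rw [← intervalIntegral.integral_of_le htt'.le]
        rw [hrep t ⟨le_rfl, htt'.le⟩ t' ⟨htt'.le, le_rfl⟩]
        abel
      rwa [heq] at havg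
    refine hCclosed.mem_of_tendsto ?_ hev
    exact ((hpt t').sub (hpt t)).const_smul _
  -- derivative as limit of slopes from the right
  have hd : HasDerivAt ψ (deriv ψ t) t := hdiff.hasDerivAt
  rw [hasDerivAt_iff_tendsto_slope] at hd
  have hd' : Tendsto (slope ψ t) (𝓝[>] t) (𝓝 (deriv ψ t)) :=
    hd.mono_left (nhdsWithin_mono t (fun r hr => ne_of_gt hr))
  refine hCclosed.mem_of_tendsto hd' ?_
  have hmem : Ioo t (t + h₀) ∈ 𝓝[>] t := Ioo_mem_nhdsGT_of_mem ⟨le_rfl, by linarith⟩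
  filter_upwards [hmem] with t' ht'
  have := hslope t' ht'.1 (by linarith [ht'.2])
  rwa [slope_def_module]

end Limit

section Main
variable {n : ℕ} {F : (Fin n → ℝ) → Set (Fin n → ℝ)} {X S U : Set (Fin n → ℝ)}

/-- Pointwise convergence everywhere from convergence on rationals, for
equi-Lipschitz sequences. -/
lemma ptwise_limit_of_rat {M : NNReal} {ψj : ℕ → ℝ → Fin n → ℝ}
    (hlip : ∀ j, LipschitzWith M (ψj j)) {g : ℚ → Fin n → ℝ}
    (hq : ∀ q : ℚ, Tendsto (fun j => ψj j (q:ℝ)) atTop (𝓝 (g q))) :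
    ∃ ψ : ℝ → Fin n → ℝ, ∀ t, Tendsto (fun j => ψj j t) atTop (𝓝 (ψ t)) := by
  have hc : ∀ t : ℝ, ∃ L, Tendsto (fun j => ψj j t) atTop (𝓝 L) := by
    intro t
    refine cauchySeq_tendsto_of_complete ?_
    rw [Metric.cauchySeq_iff]
    intro ε hε
    obtain ⟨q, hqnear⟩ := exists_rat_near t (show 0 < ε/(4*(M+1)) by positivity)
    have hcq := (hq q).cauchySeq
    rw [Metric.cauchySeq_iff] at hcq
    obtain ⟨N, hN⟩ := hcq (ε/2) (by positivity)
    refine ⟨N, fun m hm k hk => ?_⟩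
    have hb : ∀ j, dist (ψj j t) (ψj j (q:ℝ)) ≤ ε/4 := by
      intro j
      refine le_trans ((hlip j).dist_le_mul t q) ?_
      have h1 : (M:ℝ) * dist t (q:ℝ) ≤ (M:ℝ) * (ε/(4*(M+1))) :=
        mul_le_mul_of_nonneg_left (by rw [Real.dist_eq]; exact hqnear.le) M.coe_nonneg
      have h2 : (M:ℝ) * (ε/(4*(M+1))) ≤ ε/4 := by
        have hM0 : (0:ℝ) ≤ M := M.coe_nonneg
        have heq : (M:ℝ) * (ε/(4*(M+1))) = ((M:ℝ)*ε)/(4*(M+1)) := by ring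
        rw [heq, div_le_div_iff₀ (by positivity) (by norm_num : (0:ℝ) < 4)]
        nlinarith
      linarith
    calc dist (ψj m t) (ψj k t) ≤ dist (ψj m t) (ψj m (q:ℝ)) + dist (ψj m (q:ℝ)) (ψj k (q:ℝ))
          + dist (ψj k (q:ℝ)) (ψj k t) := dist_triangle4 _ _ _ _
      _ < ε/4 + ε/2 + ε/4 := by
          have := hN m hm k hk
          have h1 := hb m
          have h2 := hb k
          have h3 : dist (ψj k (q:ℝ)) (ψj k t) ≤ ε/4 := by rw [dist_comm]; exact hb k
          linarith
      _ = ε := by ring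
  choose ψ hψ using hc
  exact ⟨ψ, hψ⟩

/-- Lipschitz function with a.e. derivative in `F` is a solution. -/
lemma isSolOn_of_deriv {M : NNReal} {ψ : ℝ → Fin n → ℝ} (hlip : LipschitzWith M ψ)
    (hval : ∀ t, ψ t ∈ U)
    (hd : ∀ t, DifferentiableAt ℝ ψ t → deriv ψ t ∈ F (ψ t)) : IsSolOn F U ψ univ := by
  refine ⟨fun t _ => hval t, deriv ψ, fun a _ b _ => deriv_intervalIntegrable_lip hlip a b,
    ?_, fun a _ b _ => lipschitz_ftc hlip a b⟩
  filter_upwards [hlip.ae_differentiableAt_real] with t ht _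
  exact hd t ht

end Main


end DIncl

/-- If `ω_S(U) ⊆ U` then `Inv(U) = ω_S(U)`. -/
theorem maxInv_eq_omegaS {n : ℕ} (X : Set (Fin n → ℝ)) (hX : IsCompact X)
    (F : (Fin n → ℝ) → Set (Fin n → ℝ)) (hF : FilippovOn F X)
    (S : Set (Fin n → ℝ)) (hSX : S ⊆ X) (hS : IsCompact S) (hSinv : IsInvSet F S)
    (U : Set (Fin n → ℝ)) (hUS : U ⊆ S) (hω : omegaS F S U ⊆ U) :
    maxInv F U = omegaS F S U := by
  apply Set.Subset.antisymm
  · -- easy direction : maxInv ⊆ omegaS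
    rintro y ⟨ψ, hψ, hψ0⟩
    rw [omegaS, mem_iInter₂]
    intro t ht
    apply subset_closure
    rw [mflowSet, mem_iUnion₂]
    refine ⟨t, mem_Ici.2 le_rfl, ?_⟩
    rw [mem_iUnion₂]
    refine ⟨ψ (-t), hψ.1 (-t) (mem_univ _), ?_⟩
    refine ⟨fun s => ψ (s + (-t)), ?_, by norm_num, by rw [← hψ0]; norm_num⟩
    exact (((hψ.mono_set hUS).shift (-t)).mono_time (fun r _ => mem_univ _))
  · -- hard direction : omegaS ⊆ maxInv
    intro y hy
    obtain ⟨M, hM⟩ := exists_bound hX hF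
    have hsel : ∀ k : ℕ, ∃ (T : ℝ) (x : ℝ → Fin n → ℝ), (k:ℝ) ≤ T ∧ x 0 ∈ U ∧
        IsSolOn F S x (Icc 0 T) ∧ dist (x T) y < 1/((k:ℝ)+1) := by
      intro k
      have h1 := mem_iInter₂.1 hy (k:ℝ) (mem_Ici.2 (Nat.cast_nonneg k))
      obtain ⟨b, hb, hdb⟩ := Metric.mem_closure_iff.1 h1 (1/((k:ℝ)+1)) (by positivity)
      simp only [mflowSet, mem_iUnion, mem_Ici] at hb
      obtain ⟨T, hT, a, ha, hbm⟩ := hb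
      obtain ⟨x, hsol, hx0, hxT⟩ := hbm
      exact ⟨T, x, hT, hx0.symm ▸ ha, hsol, by rw [hxT, dist_comm]; exact hdb⟩
    choose tk xk htk hxkU hxksol hxkdist using hsel
    have htk0 : ∀ k, (0:ℝ) ≤ tk k := fun k => le_trans (Nat.cast_nonneg k) (htk k)
    have hbkS : ∀ k, xk k (tk k) ∈ S := fun k => (hxksol k).1 (tk k) ⟨htk0 k, le_rfl⟩
    have hphi : ∀ k, ∃ φ, IsSolOn F S φ univ ∧ φ 0 = xk k (tk k) := fun k => hSinv (hbkS k)
    choose φk hφsol hφ0 using hphi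
    set ψk : ℕ → ℝ → Fin n → ℝ :=
      fun k s => if s ≤ 0 then xk k (max (s + tk k) 0) else φk k s with hψkdef
    have hψk0 : ∀ k, ψk k 0 = xk k (tk k) := by
      intro k
      simp only [ψk, if_pos le_rfl, zero_add, max_eq_left (htk0 k)]
    have harg : ∀ k (s : ℝ), s ≤ 0 → max (s + tk k) 0 ∈ Icc 0 (tk k) := by
      intro k s hs
      exact ⟨le_max_right _ _, max_le (by linarith [htk0 k]) (htk0 k)⟩
    have hψkS : ∀ k (s : ℝ), ψk k s ∈ S := by
      intro k s
      by_cases hs : s ≤ 0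
      · simp only [ψk, if_pos hs]; exact (hxksol k).1 _ (harg k s hs)
      · simp only [ψk, if_neg hs]; exact (hφsol k).1 _ (mem_univ _)
    -- Lipschitz bounds
    have hxklip : ∀ k, LipschitzOnWith M (xk k) (Icc 0 (tk k)) :=
      fun k => (hxksol k).lipschitzOnWith Set.ordConnected_Icc hSX hM
    have hφklip : ∀ k, LipschitzWith M (φk k) := fun k =>
      lipschitzOnWith_univ.1 ((hφsol k).lipschitzOnWith Set.ordConnected_univ hSX hM)
    have hψklip : ∀ k, LipschitzWith M (ψk k) := by
      intro k
      have hneg : ∀ s t : ℝ, s ≤ 0 → t ≤ 0 → dist (ψk k s) (ψk k t) ≤ M * dist s t := by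
        intro s t hs ht
        simp only [ψk, if_pos hs, if_pos ht]
        refine le_trans ((lipschitzOnWith_iff_dist_le_mul.1 (hxklip k)) _ (harg k s hs) _
          (harg k t ht)) ?_
        refine mul_le_mul_of_nonneg_left ?_ M.coe_nonneg
        rw [Real.dist_eq, Real.dist_eq]
        calc |max (s + tk k) 0 - max (t + tk k) 0| ≤ |(s + tk k) - (t + tk k)| :=
              abs_max_sub_max_le_abs _ _ _
          _ = |s - t| := by ring_nf
      have hmix : ∀ s t : ℝ, s ≤ 0 → 0 < t → dist (ψk k s) (ψk k t) ≤ M * dist s t := by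
        intro s t hs ht
        have h1 := hneg s 0 hs le_rfl
        have h2 : dist (ψk k 0) (ψk k t) ≤ M * dist (0:ℝ) t := by
          have he : ψk k 0 = φk k 0 := by rw [hψk0 k, ← hφ0 k]
          have he2 : ψk k t = φk k t := by simp only [ψk, if_neg (not_le.2 ht)]
          rw [he, he2]
          exact (hφklip k).dist_le_mul 0 t
        calc dist (ψk k s) (ψk k t) ≤ dist (ψk k s) (ψk k 0) + dist (ψk k 0) (ψk k t) :=
              dist_triangle _ _ _
          _ ≤ M * dist s 0 + M * dist 0 t := add_le_add h1 h2
          _ ≤ M * dist s t := by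
              rw [Real.dist_eq, Real.dist_eq, Real.dist_eq]
              rw [abs_of_nonpos (by linarith : s - 0 ≤ 0), abs_of_nonpos (by linarith : (0:ℝ) - t ≤ 0),
                abs_of_nonpos (by linarith : s - t ≤ 0)]
              have := M.coe_nonneg
              nlinarith
      refine LipschitzWith.of_dist_le_mul fun s t => ?_
      rcases le_or_gt s 0 with hs | hs <;> rcases le_or_gt t 0 with ht | ht
      · exact hneg s t hs ht
      · exact hmix s t hs ht
      · rw [dist_comm (ψk k s) (ψk k t), dist_comm s t]
        exact hmix t s ht hs
      · simp only [ψk, if_neg (not_le.2 hs), if_neg (not_le.2 ht)]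
        exact (hφklip k).dist_le_mul s t
    -- ψk is a solution on [s,t] whenever -tk k ≤ s
    have hsol_neg : ∀ k (s t : ℝ), s ≤ t → -(tk k) ≤ s → t ≤ 0 →
        IsSolOn F S (ψk k) (Icc s t) := by
      intro k s t hst hs ht
      have hsub : Icc s t ⊆ {r : ℝ | r + tk k ∈ Icc 0 (tk k)} := by
        intro r hr
        have h1 := hr.1; have h2 := hr.2
        exact ⟨by simp only [mem_Icc] at *; linarith, by linarith [htk0 k]⟩
      refine (((hxksol k).shift (tk k)).mono_time hsub).congr (fun r hr => ?_)
      have hr0 : r ≤ 0 := le_trans hr.2 ht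
      simp only [ψk, if_pos hr0]
      rw [max_eq_left (by linarith [hr.1] : (0:ℝ) ≤ r + tk k)]
    have hsol_pos : ∀ k (s t : ℝ), s ≤ t → 0 ≤ s → IsSolOn F S (ψk k) (Icc s t) := by
      intro k s t hst hs
      refine ((hφsol k).mono_time (fun r _ => mem_univ r)).congr (fun r hr => ?_)
      by_cases hr0 : r ≤ 0
      · have hr00 : r = 0 := le_antisymm hr0 (hs.trans hr.1)
        rw [hr00, hψk0 k, hφ0 k]
      · simp only [ψk, if_neg hr0]
    have hsolk : ∀ k (s t : ℝ), s ≤ t → -(tk k) ≤ s → IsSolOn F S (ψk k) (Icc s t) := by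
      intro k s t hst hs
      rcases le_or_gt t 0 with ht | ht
      · exact hsol_neg k s t hst hs ht
      rcases le_or_gt 0 s with hs0 | hs0
      · exact hsol_pos k s t hst hs0
      · exact IsSolOn.concat hs0.le ht.le (hsol_neg k s 0 hs0.le hs le_rfl)
          (hsol_pos k 0 t ht.le le_rfl)
    -- subsequence converging on the rationals
    obtain ⟨g, hgmem, σ, hσmono, hσtend⟩ :=
      (isCompact_univ_pi fun _ : ℚ => hS).isSeqCompact
        (x := fun k (q : ℚ) => ψk k (q:ℝ)) (fun k => Set.mem_univ_pi.2 fun q => hψkS k q)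
    have hqconv : ∀ q : ℚ, Tendsto (fun j => ψk (σ j) (q:ℝ)) atTop (𝓝 (g q)) := by
      intro q
      have := tendsto_pi_nhds.1 hσtend q
      simpa using this
    obtain ⟨ψ, hψtend⟩ := ptwise_limit_of_rat (ψj := fun j => ψk (σ j))
      (fun j => hψklip (σ j)) hqconv
    have hjle : ∀ j : ℕ, (j:ℝ) ≤ tk (σ j) := fun j =>
      le_trans (Nat.cast_le.2 hσmono.le_apply) (htk (σ j))
    have hevsol : ∀ s t : ℝ, s < t → ∀ᶠ j in atTop, IsSolOn F S (ψk (σ j)) (Icc s t) := by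
      intro s t hst
      obtain ⟨N, hN⟩ := exists_nat_ge (-s)
      refine eventually_atTop.2 ⟨N, fun j hj => ?_⟩
      refine hsolk (σ j) s t hst.le ?_
      have h1 : (N:ℝ) ≤ tk (σ j) := le_trans (Nat.cast_le.2 hj) (hjle j)
      linarith
    obtain ⟨hψS, hψder⟩ := deriv_mem_of_lim hF hSX hS.isClosed
      (fun j => hψklip (σ j)) hψtend hevsol
    -- ψ 0 = y
    have hψ0 : ψ 0 = y := by
      have h1 : Tendsto (fun j => ψk (σ j) 0) atTop (𝓝 y) := by
        rw [tendsto_iff_dist_tendsto_zero]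
        refine squeeze_zero (fun j => dist_nonneg) (fun j => ?_)
          tendsto_one_div_add_atTop_nhds_zero_nat
        rw [hψk0 (σ j)]
        calc dist (xk (σ j) (tk (σ j))) y ≤ 1/((σ j:ℝ)+1) := (hxkdist (σ j)).le
          _ ≤ 1/((j:ℝ)+1) := by
              apply one_div_le_one_div_of_le (by positivity)
              have : (j:ℝ) ≤ (σ j:ℝ) := Nat.cast_le.2 hσmono.le_apply
              linarith
      exact tendsto_nhds_unique (hψtend 0) h1
    -- every value of ψ lies in omegaS, hence in U
    have hψΩ : ∀ t : ℝ, ψ t ∈ omegaS F S U := by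
      intro t
      rw [omegaS, mem_iInter₂]
      intro m hm
      rw [mem_Ici] at hm
      refine mem_closure_of_tendsto (hψtend t) ?_
      obtain ⟨N, hN⟩ := exists_nat_ge (max (m - t) (-t))
      refine eventually_atTop.2 ⟨N, fun j hj => ?_⟩
      have hNj : (N:ℝ) ≤ tk (σ j) := le_trans (Nat.cast_le.2 hj) (hjle j)
      have h1 : m - t ≤ tk (σ j) := le_trans (le_trans (le_max_left _ _) hN) hNj
      have h2 : -t ≤ tk (σ j) := le_trans (le_trans (le_max_right _ _) hN) hNj
      rw [mflowSet, mem_iUnion₂]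
      refine ⟨tk (σ j) + t, mem_Ici.2 (by linarith), ?_⟩
      rw [mem_iUnion₂]
      refine ⟨xk (σ j) 0, hxkU (σ j), ?_⟩
      have hsol2 : IsSolOn F S (ψk (σ j)) (Icc (-(tk (σ j))) t) :=
        hsolk (σ j) (-(tk (σ j))) t (by linarith) le_rfl
      have hsub : Icc 0 (tk (σ j) + t) ⊆
          {r : ℝ | r + -(tk (σ j)) ∈ Icc (-(tk (σ j))) t} := by
        intro r hr
        have h3 := hr.1; have h4 := hr.2
        simp only [mem_setOf_eq, mem_Icc] at *
        constructor <;> linarith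
      refine ⟨fun s => ψk (σ j) (s + -(tk (σ j))), (hsol2.shift (-(tk (σ j)))).mono_time hsub,
        ?_, ?_⟩
      · show ψk (σ j) (0 + -(tk (σ j))) = xk (σ j) 0
        rw [zero_add]
        simp only [ψk]
        rw [if_pos (by linarith [htk0 (σ j)] : -(tk (σ j)) ≤ (0:ℝ))]
        rw [show -(tk (σ j)) + tk (σ j) = (0:ℝ) by ring, max_self]
      · show ψk (σ j) (tk (σ j) + t + -(tk (σ j))) = ψk (σ j) t
        rw [show tk (σ j) + t + -(tk (σ j)) = t by ring]
    have hψU : ∀ t, ψ t ∈ U := fun t => hω (hψΩ t)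
    exact ⟨ψ, isSolOn_of_deriv (lip_of_ptwise (fun j => hψklip (σ j)) hψtend) hψU hψder, hψ0⟩
end

section
/- Let S be a compact invariant set for the multiflow Φ of a differential inclusion, let A be an attractor in S with ω_S(U) = A for a neighborhood U of A in S. Then there exists t* > 0 such that cl(Φ^S([t*,∞), U)) ⊂ U. -/
open Set MeasureTheory Filter Topology

open DIncl Set MeasureTheory Filter Topology


/-- For an attractor `A = ω_S(U)`, some `t* > 0` has `cl (Φ^S([t*,∞),U)) ⊆ U`. -/
theorem attractor_eventually_inside {n : ℕ} (X : Set (Fin n → ℝ)) (hX : IsCompact X)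
    (F : (Fin n → ℝ) → Set (Fin n → ℝ)) (hF : FilippovOn F X)
    (S : Set (Fin n → ℝ)) (hSX : S ⊆ X) (hS : IsCompact S) (hSinv : IsInvSet F S)
    (A U : Set (Fin n → ℝ)) (hUS : U ⊆ S) (hAU : A ⊆ relInt S U)
    (hA : omegaS F S U = A) :
    ∃ tstar > (0:ℝ), closure (mflowSet F S (Ici tstar) U) ⊆ U := by
  classical
  -- the open set V with A ⊆ V and V ∩ S ⊆ U
  set V : Set (Fin n → ℝ) := ⋃ O ∈ {O : Set (Fin n → ℝ) | IsOpen O ∧ O ∩ S ⊆ U}, O with hV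
  have hVopen : IsOpen V := isOpen_biUnion fun O hO => hO.1
  have hVS : V ∩ S ⊆ U := by
    rintro x ⟨hx, hxS⟩
    rcases mem_iUnion₂.1 hx with ⟨O, ⟨-, hOU⟩, hxO⟩
    exact hOU ⟨hxO, hxS⟩
  have hAV : A ⊆ V := by
    intro a ha
    obtain ⟨-, hnh⟩ := hAU ha
    rcases mem_nhdsWithin.1 hnh with ⟨O, hOopen, haO, hOS⟩
    exact mem_iUnion₂.2 ⟨O, ⟨hOopen, hOS⟩, haO⟩
  -- monotonicity of mflowSet in the time set
  have hmono : ∀ s t : ℝ, s ≤ t →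
      mflowSet F S (Ici t) U ⊆ mflowSet F S (Ici s) U := fun s t hst =>
    biUnion_subset_biUnion_left (Ici_subset_Ici.2 hst)
  -- mflowSet lands in S for nonnegative times
  have hsubS : ∀ t : ℝ, 0 ≤ t → mflowSet F S (Ici t) U ⊆ S := by
    intro t ht b hb
    rcases mem_iUnion₂.1 hb with ⟨τ, hτ, hb⟩
    rcases mem_iUnion₂.1 hb with ⟨a, -, x, hsol, -, hxT⟩
    exact hxT ▸ hsol.1 τ ⟨le_trans ht hτ, le_rfl⟩
  -- the decreasing family of compact sets
  set K : ℕ → Set (Fin n → ℝ) := fun m => closure (mflowSet F S (Ici ((m:ℝ)+1)) U) with hK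
  have hKS : ∀ m, K m ⊆ S := fun m =>
    closure_minimal (hsubS _ (by positivity)) hS.isClosed
  have hKcl : ∀ m, IsClosed (K m) := fun m => isClosed_closure
  have hKcomp : ∀ m, IsCompact (K m) := fun m => hS.of_isClosed_subset (hKcl m) (hKS m)
  have hKmono : ∀ p q : ℕ, p ≤ q → K q ⊆ K p := fun p q hpq =>
    closure_mono (hmono _ _ (by exact_mod_cast add_le_add_left (Nat.cast_le.2 hpq) 1))
  have hKA : (⋂ m, K m) ⊆ A := by
    intro x hx
    rw [← hA]
    refine mem_iInter₂.2 fun t ht => ?_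
    obtain ⟨m, hm⟩ := exists_nat_ge t
    exact closure_mono (hmono t (m+1) (hm.trans (by linarith))) (mem_iInter.1 hx m)
  -- find m with K m ⊆ V using compactness
  by_contra hcon
  push_neg at hcon
  have hne : ∀ m, (K m \ V).Nonempty := by
    intro m
    by_contra hm
    rw [not_nonempty_iff_eq_empty, diff_eq_empty] at hm
    exact hcon ((m:ℝ)+1) (by positivity) (fun x hx => hVS ⟨hm hx, hKS m hx⟩)
  have hdir : Directed (· ⊇ ·) (fun m => K m \ V) := fun p q =>
    ⟨max p q, diff_subset_diff_left (hKmono _ _ (le_max_left p q)),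
      diff_subset_diff_left (hKmono _ _ (le_max_right p q))⟩
  obtain ⟨x, hx⟩ := IsCompact.nonempty_iInter_of_directed_nonempty_isCompact_isClosed
    (fun m => K m \ V) hdir hne
    (fun m => (hKcomp m).of_isClosed_subset ((hKcl m).sdiff hVopen) diff_subset)
    (fun m => (hKcl m).sdiff hVopen)
  have hxA : x ∈ A := hKA (mem_iInter.2 fun m => (mem_iInter.1 hx m).1)
  exact (mem_iInter.1 hx 0).2 (hAV hxA)
end

section
/- Let S be a compact invariant set for the multiflow Φ of a differential inclusion and let A be an attractor in S. Then the dual repeller R := {x ∈ S | ω_S(x) ⊄ A} is a repeller in S, i.e. there exists a neighborhood U* of R in S with α_S(U*) = R. -/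
open Set MeasureTheory Filter Topology

open DIncl Set MeasureTheory Filter Topology


namespace DInclAux

open DIncl Set MeasureTheory Filter Topology

set_option linter.unusedSectionVars false
set_option linter.unusedVariables false

variable {E : Type*} [NormedAddCommGroup E] [NormedSpace ℝ E] [CompleteSpace E]

theorem solOn_mono {F : E → Set E} {X : Set E} {x : ℝ → E} {I J : Set ℝ}
    (h : IsSolOn F X x I) (hJI : J ⊆ I) : IsSolOn F X x J := by
  obtain ⟨hmem, v, h1, h2, h3⟩ := h
  exact ⟨fun t ht => hmem t (hJI ht),
    v, fun a ha b hb => h1 a (hJI ha) b (hJI hb),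
    h2.mono fun t ht hJ => ht (hJI hJ),
    fun a ha b hb => h3 a (hJI ha) b (hJI hb)⟩

theorem solOn_shift {F : E → Set E} {X : Set E} {x : ℝ → E} {r s : ℝ}
    (h : IsSolOn F X x (Icc 0 r)) (hs0 : 0 ≤ s) (hsr : s ≤ r) :
    IsSolOn F X (fun t => x (s + t)) (Icc 0 (r - s)) := by
  obtain ⟨hmem, v, h1, h2, h3⟩ := h
  have hsub : ∀ t ∈ Icc (0:ℝ) (r - s), s + t ∈ Icc 0 r := by
    intro t ht
    exact ⟨by linarith [ht.1], by linarith [ht.2]⟩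
  refine ⟨fun t ht => hmem _ (hsub t ht), fun t => v (s + t), ?_, ?_, ?_⟩
  · intro a ha b hb
    have := h1 (s + a) (hsub a ha) (s + b) (hsub b hb)
    have := this.comp_add_left s
    simpa using this
  · have hmp : MeasurePreserving (fun t : ℝ => s + t) volume volume :=
      measurePreserving_add_left volume s
    have := hmp.quasiMeasurePreserving.ae h2
    refine this.mono fun t ht h' => ht (hsub t h')
  · intro a ha b hb
    have hkey := h3 (s + a) (hsub a ha) (s + b) (hsub b hb)
    simp only
    rw [hkey]
    congr 1
    rw [intervalIntegral.integral_comp_add_left (fun u => v u) s]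

theorem mflow_subset_of_nonneg {F : E → Set E} {S : Set E} {t : ℝ} (ht : 0 ≤ t) (a : E) :
    mflow F S t a ⊆ S := by
  rintro b ⟨x, hx, hx0, hxt⟩
  rw [← hxt]
  exact hx.1 t ⟨ht, le_refl t⟩

theorem start_mem_of_mflow {F : E → Set E} {S : Set E} {t : ℝ} (ht : 0 ≤ t) {a b : E}
    (h : b ∈ mflow F S t a) : a ∈ S := by
  obtain ⟨x, hx, hx0, hxt⟩ := h
  rw [← hx0]
  exact hx.1 0 ⟨le_refl 0, ht⟩

/-- Splitting a solution at an intermediate time. -/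
theorem mflow_split {F : E → Set E} {S : Set E} {r s : ℝ} {a b : E}
    (h : b ∈ mflow F S r a) (hs0 : 0 ≤ s) (hsr : s ≤ r) :
    ∃ m ∈ mflow F S s a, b ∈ mflow F S (r - s) m := by
  obtain ⟨x, hx, hx0, hxr⟩ := h
  refine ⟨x s, ⟨x, solOn_mono hx (Icc_subset_Icc le_rfl hsr), hx0, rfl⟩,
    ⟨fun t => x (s + t), solOn_shift hx hs0 hsr, by simp, by simp [← hxr]⟩⟩

end DInclAux
namespace DInclAux
set_option linter.unusedSectionVars false
set_option linter.deprecated false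

variable {E : Type*} [NormedAddCommGroup E] [NormedSpace ℝ E] [CompleteSpace E]

theorem relInt_eq_open_inter (S U : Set E) : ∃ Q : Set E, IsOpen Q ∧ relInt S U = Q ∩ S := by
  refine ⟨⋃₀ {O | IsOpen O ∧ O ∩ S ⊆ U}, isOpen_sUnion fun O hO => hO.1, ?_⟩
  ext x
  constructor
  · rintro ⟨hxS, hU⟩
    rw [mem_nhdsWithin] at hU
    obtain ⟨O, hO, hxO, hOS⟩ := hU
    exact ⟨⟨O, ⟨hO, hOS⟩, hxO⟩, hxS⟩
  · rintro ⟨⟨O, ⟨hO, hOS⟩, hxO⟩, hxS⟩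
    exact ⟨hxS, mem_nhdsWithin.2 ⟨O, hO, hxO, hOS⟩⟩

theorem relInt_subset (S U : Set E) : relInt S U ⊆ U := by
  rintro x ⟨hxS, hU⟩
  exact mem_of_mem_nhdsWithin hxS hU

theorem mflowSet_subset_of_nonneg {F : E → Set E} {S : Set E} {t : ℝ} (ht : 0 ≤ t)
    (U : Set E) : mflowSet F S (Ici t) U ⊆ S := by
  intro b hb
  simp only [mflowSet, mem_iUnion] at hb
  obtain ⟨r, hr, a, ha, hab⟩ := hb
  exact mflow_subset_of_nonneg (le_trans ht hr) a hab

theorem mflowSet_anti {F : E → Set E} {S : Set E} {t t' : ℝ} (h : t ≤ t')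
    (U : Set E) : mflowSet F S (Ici t') U ⊆ mflowSet F S (Ici t) U := by
  intro b hb
  simp only [mflowSet, mem_iUnion] at hb ⊢
  obtain ⟨r, hr, a, ha, hab⟩ := hb
  exact ⟨r, le_trans h hr, a, ha, hab⟩

/-- The key compactness lemma: if `ω_S(U) ⊆ G` with `G` relatively open in the compact
set `S`, then some forward tail of `U` is contained in `G`. -/
theorem exists_time_subset {F : E → Set E} {S : Set E} (hS : IsCompact S)
    {U G : Set E} (hG : ∃ Q : Set E, IsOpen Q ∧ G = Q ∩ S)
    (hsub : omegaS F S U ⊆ G) :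
    ∃ T : ℝ, 0 ≤ T ∧ closure (mflowSet F S (Ici T) U) ⊆ G := by
  obtain ⟨Q, hQ, rfl⟩ := hG
  set C : ℕ → Set E := fun k => closure (mflowSet F S (Ici (k:ℝ)) U) with hC
  have hCS : ∀ k, C k ⊆ S := fun k =>
    closure_minimal (mflowSet_subset_of_nonneg (Nat.cast_nonneg k) U) hS.isClosed
  have hCanti : ∀ k, C (k+1) ⊆ C k := fun k =>
    closure_mono (mflowSet_anti (by exact_mod_cast Nat.le_succ k) U)
  have hIC : ⋂ k, C k ⊆ Q := by
    intro x hx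
    have : x ∈ omegaS F S U := by
      simp only [omegaS, mem_iInter]
      intro t ht
      have hx' := (mem_iInter.1 hx) ⌈t⌉₊
      exact closure_mono (mflowSet_anti (Nat.le_ceil t) U) hx'
    exact (hsub this).1
  by_contra hcon
  push_neg at hcon
  have hne : ∀ k : ℕ, (C k \ Q).Nonempty := by
    intro k
    have h1 : ¬ C k ⊆ Q ∩ S := hcon (k:ℝ) (Nat.cast_nonneg k)
    obtain ⟨b, hb, hbQ⟩ := not_subset.1 h1
    exact ⟨b, hb, fun hQ' => hbQ ⟨hQ', hCS k hb⟩⟩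
  have hcls : ∀ k, IsClosed (C k \ Q) := fun k => isClosed_closure.sdiff hQ
  have hcmp : ∀ k, IsCompact (C k \ Q) := fun k =>
    hS.of_isClosed_subset (hcls k) (fun x hx => hCS k hx.1)
  have hmono : ∀ k, C (k+1) \ Q ⊆ C k \ Q := fun k => diff_subset_diff_left (hCanti k)
  obtain ⟨x, hx⟩ := IsCompact.nonempty_iInter_of_sequence_nonempty_isCompact_isClosed
    (fun k => C k \ Q) hmono hne (hcmp 0) hcls
  have : x ∈ Q := hIC (mem_iInter.2 fun k => ((mem_iInter.1 hx) k).1)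
  exact ((mem_iInter.1 hx) 0).2 this

end DInclAux
namespace DInclAux

variable {E : Type*} [NormedAddCommGroup E] [NormedSpace ℝ E] [CompleteSpace E]

/-- A Filippov map on a compact set is uniformly bounded. -/
theorem filippov_bounded {F : E → Set E} {X : Set E} (hX : IsCompact X)
    (hF : FilippovOn F X) : ∃ M : ℝ, 0 ≤ M ∧ ∀ x ∈ X, ∀ v ∈ F x, ‖v‖ ≤ M := by
  have hR : ∀ x ∈ X, ∃ R : ℝ, ∀ v ∈ F x, ‖v‖ ≤ R := by
    intro x hx
    obtain ⟨R, hR⟩ := ((hF.2 x hx).1.isBounded).subset_closedBall 0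
    exact ⟨R, fun v hv => by simpa [Metric.mem_closedBall, dist_zero_right] using hR hv⟩
  choose! R hRb using hR
  have hδ : ∀ x ∈ X, ∃ δ > 0, ∀ y ∈ X, dist y x < δ → ∀ v ∈ F y, ‖v‖ ≤ R x + 1 := by
    intro x hx
    obtain ⟨δ, hδ0, hδ'⟩ := hF.1 x hx 1 one_pos
    refine ⟨δ, hδ0, fun y hy hd v hv => ?_⟩
    obtain ⟨w, hw, hdw⟩ := hδ' y hy hd hv
    calc ‖v‖ = ‖w + (v - w)‖ := by rw [add_sub_cancel]
      _ ≤ ‖w‖ + ‖v - w‖ := norm_add_le _ _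
      _ ≤ R x + 1 := add_le_add (hRb x hx w hw) (by rw [← dist_eq_norm]; exact le_of_lt hdw)
  choose! δ hδ0 hδb using hδ
  have hcov : X ⊆ ⋃ x ∈ X, Metric.ball x (δ x) := fun x hx =>
    mem_biUnion hx (Metric.mem_ball_self (hδ0 x hx))
  obtain ⟨t, htX, htfin, hcov'⟩ :=
    hX.elim_finite_subcover_image (fun x _ => Metric.isOpen_ball) hcov
  set N : ℕ := htfin.toFinset.sup fun x => ⌈R x + 1⌉₊ with hN
  refine ⟨(N : ℝ), Nat.cast_nonneg N, fun y hy v hv => ?_⟩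
  obtain ⟨x, hxt, hyx⟩ := by simpa only [mem_iUnion] using hcov' hy
  calc ‖v‖ ≤ R x + 1 := hδb x (htX hxt) y hy hyx v hv
    _ ≤ (⌈R x + 1⌉₊ : ℝ) := Nat.le_ceil _
    _ ≤ (N : ℝ) := Nat.cast_le.2 (Finset.le_sup (f := fun x => ⌈R x + 1⌉₊) (htfin.mem_toFinset.2 hxt))

end DInclAux
namespace DInclAux
open Pointwise
set_option linter.unusedSectionVars false
set_option maxHeartbeats 1000000

variable {E : Type*} [NormedAddCommGroup E] [NormedSpace ℝ E] [CompleteSpace E]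
  [MeasurableSpace E] [BorelSpace E] [FiniteDimensional ℝ E]

/-- difference quotients along a null sequence converge to the derivative -/
theorem tendsto_quot {Z : ℝ → E} {t : ℝ} (hd : DifferentiableAt ℝ Z t) {u : ℕ → ℝ}
    (hu0 : ∀ j, u j ≠ 0) (hu : Tendsto u atTop (𝓝 0)) :
    Tendsto (fun j => (u j)⁻¹ • (Z (t + u j) - Z t)) atTop (𝓝 (deriv Z t)) := by
  have hs := hd.hasDerivAt
  rw [hasDerivAt_iff_tendsto_slope] at hs
  have h1 : Tendsto (fun j => t + u j) atTop (𝓝[≠] t) := by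
    apply tendsto_nhdsWithin_of_tendsto_nhds_of_eventually_within
    · simpa using tendsto_const_nhds.add hu
    · exact Eventually.of_forall fun j => by simp [hu0 j]
  have h2 := hs.comp h1
  convert h2 using 2 with j
  rw [Function.comp_apply, slope_def_module]
  simp

/-- The key closure property: limits of time-`σ` flow points are time-`σ` flow points. -/
theorem mflow_limit {F : E → Set E} {X S : Set E} (hX : IsCompact X) (hF : FilippovOn F X)
    (hS : IsCompact S) (hSX : S ⊆ X) {σ : ℝ} (hσ : 0 ≤ σ) {c e : ℕ → E} {b p : E}
    (hc : Tendsto c atTop (𝓝 b)) (he : Tendsto e atTop (𝓝 p))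
    (hm : ∀ k, e k ∈ mflow F S σ (c k)) : p ∈ mflow F S σ b := by
  classical
  obtain ⟨M, hM0, hMb⟩ := filippov_bounded hX hF
  choose z hz hz0 hzσ using hm
  have hzS : ∀ k, ∀ t ∈ Icc 0 σ, z k t ∈ S := fun k => (hz k).1
  choose v hvint hvmem hvid using fun k => (hz k).2
  -- uniform Lipschitz bound on solutions
  have hlipz : ∀ k, ∀ s ∈ Icc (0:ℝ) σ, ∀ t ∈ Icc (0:ℝ) σ, ‖z k t - z k s‖ ≤ M * |t - s| := by
    intro k s hs t ht
    have hsub : Set.uIoc s t ⊆ Icc 0 σ := fun u hu =>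
      ⟨((le_min hs.1 ht.1).trans_lt hu.1).le, hu.2.trans (max_le hs.2 ht.2)⟩
    have hid : z k t - z k s = ∫ u in s..t, v k u := by rw [hvid k s hs t ht]; abel
    rw [hid]
    have hb : ∀ᵐ u ∂volume.restrict (Set.uIoc s t), ‖v k u‖ ≤ M := by
      filter_upwards [ae_restrict_of_ae (hvmem k), ae_restrict_mem measurableSet_uIoc]
        with u h1 h2
      exact hMb _ (hSX (hzS k u (hsub h2))) _ (h1 (hsub h2))
    calc ‖∫ u in s..t, v k u‖ ≤ |∫ u in s..t, (M:ℝ)| :=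
          intervalIntegral.norm_integral_le_abs_of_norm_le hb intervalIntegrable_const
      _ = M * |t - s| := by
          rw [intervalIntegral.integral_const, smul_eq_mul, abs_mul, abs_of_nonneg hM0, mul_comm]
  -- clamp to [0, σ]
  set θ : ℝ → ℝ := fun t => max 0 (min t σ) with hθdef
  have hθmem : ∀ t, θ t ∈ Icc 0 σ := fun t => ⟨le_max_left _ _, max_le hσ (min_le_right t σ)⟩
  have hθeq : ∀ t ∈ Icc (0:ℝ) σ, θ t = t := fun t ht => by
    simp only [hθdef]; rw [min_eq_left ht.2, max_eq_right ht.1]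
  have hθlip : ∀ s t, |θ t - θ s| ≤ |t - s| := by
    intro s t
    simp only [hθdef]
    rw [max_comm 0 (min t σ), max_comm 0 (min s σ)]
    exact (abs_max_sub_max_le_abs _ _ _).trans
      ((abs_min_sub_min_le_max t σ s σ).trans (by simp))
  set w : ℕ → ℝ → E := fun k t => z k (θ t) with hwdef
  have hwlip : ∀ k s t, ‖w k t - w k s‖ ≤ M * |t - s| := fun k s t =>
    le_trans (hlipz k _ (hθmem s) _ (hθmem t)) (mul_le_mul_of_nonneg_left (hθlip s t) hM0)
  have hwS : ∀ k t, w k t ∈ S := fun k t => hzS k _ (hθmem t)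
  -- ultrafilter limit
  set U : Ultrafilter ℕ := Ultrafilter.of atTop with hUdef
  have hU : (U : Filter ℕ) ≤ atTop := Ultrafilter.of_le _
  have hZex : ∀ t : ℝ, ∃ q ∈ S, Tendsto (fun k => w k t) U (𝓝 q) := by
    intro t
    obtain ⟨q, hqS, hq⟩ := hS.ultrafilter_le_nhds (U.map fun k => w k t)
      (by rw [le_principal_iff]
          exact Ultrafilter.mem_map.2 (univ_mem' fun k => hwS k t))
    exact ⟨q, hqS, hq⟩
  choose Z hZS hZt using hZex
  have hZ0 : Z 0 = b := by
    refine tendsto_nhds_unique (hZt 0) ?_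
    have : (fun k => w k 0) = c := by
      funext k; simp only [hwdef]; rw [hθeq 0 ⟨le_refl _, hσ⟩, hz0]
    rw [this]; exact hc.mono_left hU
  have hZσ : Z σ = p := by
    refine tendsto_nhds_unique (hZt σ) ?_
    have : (fun k => w k σ) = e := by
      funext k; simp only [hwdef]; rw [hθeq σ ⟨hσ, le_refl _⟩, hzσ]
    rw [this]; exact he.mono_left hU
  have hZlip : ∀ s t : ℝ, ‖Z t - Z s‖ ≤ M * |t - s| := by
    intro s t
    exact le_of_tendsto (((hZt t).sub (hZt s)).norm)
      (Eventually.of_forall fun k => hwlip k s t)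
  have hlipZ : LipschitzWith (Real.toNNReal M) Z := by
    apply LipschitzWith.of_dist_le_mul
    intro s t
    rw [dist_eq_norm, Real.coe_toNNReal _ hM0, Real.dist_eq]
    simpa [abs_sub_comm] using hZlip t s
  have hZcont : Continuous Z := hlipZ.continuous
  have hdiff : ∀ᵐ t : ℝ ∂volume, DifferentiableAt ℝ Z t := hlipZ.ae_differentiableAt
  set vZ : ℝ → E := deriv Z with hvZdef
  have hvZb : ∀ t, ‖vZ t‖ ≤ M := by
    intro t
    by_cases hd : DifferentiableAt ℝ Z t
    · have hs := hd.hasDerivAt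
      rw [hasDerivAt_iff_tendsto_slope] at hs
      refine le_of_tendsto hs.norm (eventually_nhdsWithin_of_forall fun u hu => ?_)
      rw [slope_def_module, norm_smul, norm_inv, Real.norm_eq_abs]
      have h1 : |u - t| ≠ 0 := fun h0 => hu (by rwa [abs_eq_zero, sub_eq_zero] at h0)
      calc |u - t|⁻¹ * ‖Z u - Z t‖ ≤ |u - t|⁻¹ * (M * |u - t|) :=
            mul_le_mul_of_nonneg_left (hZlip t u) (inv_nonneg.2 (abs_nonneg _))
        _ = M := by field_simp
    · rw [hvZdef, deriv_zero_of_not_differentiableAt hd]; simpa using hM0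
  have hvZmeas : Measurable vZ := measurable_deriv Z
  have hvZint : ∀ a' b' : ℝ, IntervalIntegrable vZ volume a' b' := by
    intro a' b'
    refine (intervalIntegrable_const (c := M)).mono_fun
      (hvZmeas.aestronglyMeasurable.restrict) ?_
    exact Eventually.of_forall fun u => by
      simpa [Real.norm_eq_abs, abs_of_nonneg hM0] using hvZb u
  -- FTC for the Lipschitz limit function
  have hFTC : ∀ a' b' : ℝ, Z b' = Z a' + ∫ t in a'..b', vZ t := by
    intro a' b'
    set u : ℕ → ℝ := fun m => ((m:ℝ)+1)⁻¹ with hudef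
    have hupos : ∀ m, 0 < u m := fun m => by positivity
    have hu0 : ∀ m, u m ≠ 0 := fun m => (hupos m).ne'
    have hulim : Tendsto u atTop (𝓝 0) := by
      simpa [hudef, one_div] using tendsto_one_div_add_atTop_nhds_zero_nat (𝕜 := ℝ)
    set g : ℕ → ℝ → E := fun m t => (u m)⁻¹ • (Z (t + u m) - Z t) with hgdef
    have hgb : ∀ m t, ‖g m t‖ ≤ M := by
      intro m t
      simp only [hgdef]
      rw [norm_smul, norm_inv, Real.norm_eq_abs, abs_of_pos (hupos m)]
      calc (u m)⁻¹ * ‖Z (t + u m) - Z t‖ ≤ (u m)⁻¹ * (M * |t + u m - t|) :=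
            mul_le_mul_of_nonneg_left (hZlip t (t + u m)) (by positivity)
        _ = M := by
            rw [add_sub_cancel_left, abs_of_pos (hupos m)]
            field_simp
            exact mul_div_cancel_left₀ M (hu0 m)
    have hgcont : ∀ m, Continuous (g m) := fun m =>
      ((hZcont.comp (continuous_id.add continuous_const)).sub hZcont).const_smul _
    have hDCT : Tendsto (fun m => ∫ t in a'..b', g m t) atTop (𝓝 (∫ t in a'..b', vZ t)) := by
      refine intervalIntegral.tendsto_integral_filter_of_dominated_convergence (fun _ => M)
        (Eventually.of_forall fun m => (hgcont m).aestronglyMeasurable.restrict)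
        (Eventually.of_forall fun m => Eventually.of_forall fun t _ => hgb m t)
        intervalIntegrable_const ?_
      filter_upwards [hdiff] with t ht _
      exact tendsto_quot ht hu0 hulim
    have hint : ∀ s s' : ℝ, IntervalIntegrable Z volume s s' := fun s s' =>
      hZcont.intervalIntegrable s s'
    have hend : ∀ s : ℝ, Tendsto (fun m => (u m)⁻¹ • ∫ t in s..(s + u m), Z t)
        atTop (𝓝 (Z s)) := by
      intro s
      have key : ∀ m, ‖(u m)⁻¹ • (∫ t in s..(s + u m), Z t) - Z s‖ ≤ M * u m := by
        intro m
        have h1 : ∫ t in s..(s + u m), (Z t - Z s) =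
            (∫ t in s..(s + u m), Z t) - ∫ t in s..(s + u m), Z s :=
          intervalIntegral.integral_sub (hint _ _) intervalIntegrable_const
        have h2 : (∫ t in s..(s + u m), Z s) = (u m) • Z s := by
          rw [intervalIntegral.integral_const, add_sub_cancel_left]
        have h3 : (u m)⁻¹ • (∫ t in s..(s + u m), Z t) - Z s =
            (u m)⁻¹ • ∫ t in s..(s + u m), (Z t - Z s) := by
          rw [h1, smul_sub, h2, smul_smul, inv_mul_cancel₀ (hu0 m), one_smul]
        rw [h3, norm_smul, norm_inv, Real.norm_eq_abs, abs_of_pos (hupos m)]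
        have h4 : ‖∫ t in s..(s + u m), (Z t - Z s)‖ ≤ (M * u m) * |(s + u m) - s| := by
          apply intervalIntegral.norm_integral_le_of_norm_le_const
          intro x hx
          rw [Set.uIoc_of_le (by linarith [hupos m] : s ≤ s + u m)] at hx
          have hxub : |x - s| ≤ u m := by
            rw [abs_of_pos (sub_pos.2 hx.1)]
            linarith [hx.2]
          calc ‖Z x - Z s‖ ≤ M * |x - s| := hZlip s x
            _ ≤ M * u m := mul_le_mul_of_nonneg_left hxub hM0
        calc (u m)⁻¹ * ‖∫ t in s..(s + u m), (Z t - Z s)‖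
            ≤ (u m)⁻¹ * ((M * u m) * |(s + u m) - s|) :=
              mul_le_mul_of_nonneg_left h4 (by positivity)
          _ = M * u m := by
              rw [add_sub_cancel_left, abs_of_pos (hupos m)]
              field_simp
      rw [tendsto_iff_norm_sub_tendsto_zero]
      refine squeeze_zero (fun m => norm_nonneg _) key ?_
      simpa using hulim.const_mul M
    have hcomp : ∀ m, (∫ t in a'..b', g m t) =
        (u m)⁻¹ • (∫ t in b'..(b' + u m), Z t) - (u m)⁻¹ • (∫ t in a'..(a' + u m), Z t) := by
      intro m
      have e0 : (∫ t in a'..b', g m t) =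
          (u m)⁻¹ • ((∫ t in a'..b', Z (t + u m)) - ∫ t in a'..b', Z t) := by
        simp only [hgdef]
        rw [intervalIntegral.integral_smul]
        congr 1
        exact intervalIntegral.integral_sub
          ((hZcont.comp (continuous_id.add continuous_const)).intervalIntegrable _ _)
          (hint _ _)
      have e1 : (∫ t in a'..b', Z (t + u m)) = ∫ t in (a' + u m)..(b' + u m), Z t :=
        intervalIntegral.integral_comp_add_right Z (u m)
      have c1 : (∫ t in a'..(a' + u m), Z t) + (∫ t in (a' + u m)..(b' + u m), Z t) =
          ∫ t in a'..(b' + u m), Z t :=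
        intervalIntegral.integral_add_adjacent_intervals (hint _ _) (hint _ _)
      have c2 : (∫ t in a'..b', Z t) + (∫ t in b'..(b' + u m), Z t) =
          ∫ t in a'..(b' + u m), Z t :=
        intervalIntegral.integral_add_adjacent_intervals (hint _ _) (hint _ _)
      rw [e0, e1, ← smul_sub]
      congr 1
      have hcc := c1.trans c2.symm
      rw [sub_eq_sub_iff_add_eq_add, add_comm _ (∫ t in a'..(a' + u m), Z t), hcc, add_comm]
    have hlim2 : Tendsto (fun m => ∫ t in a'..b', g m t) atTop (𝓝 (Z b' - Z a')) := by
      simp_rw [hcomp]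
      exact (hend b').sub (hend a')
    have hfin := tendsto_nhds_unique hDCT hlim2
    rw [hfin]
    abel
  -- a.e. differential inclusion membership
  have hvZmem : ∀ᵐ t : ℝ ∂volume, t ∈ Icc 0 σ → vZ t ∈ F (Z t) := by
    have hkey : ∀ t ∈ Ico (0:ℝ) σ, DifferentiableAt ℝ Z t → vZ t ∈ F (Z t) := by
      intro t ht hd
      set p₀ := Z t with hp₀
      have hp₀X : p₀ ∈ X := hSX (hZS t)
      have hFcl : IsClosed (F p₀) := (hF.2 p₀ hp₀X).1.isClosed
      rw [← hFcl.closure_eq, Metric.mem_closure_iff]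
      intro ε hε
      obtain ⟨δ, hδ0, husc⟩ := hF.1 p₀ hp₀X (ε/2) (by positivity)
      set D := F p₀ + Metric.closedBall (0:E) (ε/2) with hDdef
      have hDmem : ∀ y, y ∈ D ↔ ∃ w' ∈ F p₀, dist y w' ≤ ε/2 := by
        intro y
        rw [hDdef, Set.mem_add]
        constructor
        · rintro ⟨w', hw', q, hq, rfl⟩
          refine ⟨w', hw', ?_⟩
          rw [Metric.mem_closedBall, dist_zero_right] at hq
          simpa [dist_eq_norm] using hq
        · rintro ⟨w', hw', hdw⟩
          refine ⟨w', hw', y - w', ?_, by abel⟩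
          rw [Metric.mem_closedBall, dist_zero_right, ← dist_eq_norm]
          exact hdw
      have hDconv : Convex ℝ D := ((hF.2 p₀ hp₀X).2.1).add (convex_closedBall _ _)
      have hDcl : IsClosed D := ((hF.2 p₀ hp₀X).1.add (isCompact_closedBall _ _)).isClosed
      have htI : t ∈ Icc 0 σ := ⟨ht.1, le_of_lt ht.2⟩
      have hquot : ∀ h : ℝ, 0 < h → t + h ≤ σ → M * h < δ/2 →
          h⁻¹ • (Z (t + h) - Z t) ∈ D := by
        intro h hh0 hhσ hhδ
        have hthI : t + h ∈ Icc 0 σ := ⟨by linarith [ht.1], hhσ⟩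
        have hwz1 : ∀ k, w k (t + h) = z k (t + h) := fun k => by
          simp only [hwdef]; rw [hθeq _ hthI]
        have hwz2 : ∀ k, w k t = z k t := fun k => by
          simp only [hwdef]; rw [hθeq _ htI]
        have hlim : Tendsto (fun k => h⁻¹ • (z k (t + h) - z k t)) U
            (𝓝 (h⁻¹ • (Z (t + h) - Z t))) := by
          have h5 := ((hZt (t + h)).sub (hZt t)).const_smul (h⁻¹)
          simpa only [hwz1, hwz2] using h5
        refine hDcl.mem_of_tendsto hlim ?_
        have hev : ∀ᶠ k in (U : Filter ℕ), dist (w k t) p₀ < δ/2 :=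
          Metric.tendsto_nhds.mp (hZt t) (δ/2) (by positivity)
        filter_upwards [hev] with k hk
        have hIioc : z k (t + h) - z k t = ∫ s in Set.Ioc t (t + h), v k s ∂volume := by
          rw [hvid k t htI (t + h) hthI,
            ← intervalIntegral.integral_of_le (by linarith : t ≤ t + h)]
          abel
        have hintOn : IntegrableOn (v k) (Set.Ioc t (t + h)) volume :=
          (hvint k t htI (t + h) hthI).1
        have hmemD : ∀ᵐ s ∂volume.restrict (Set.Ioc t (t + h)), v k s ∈ D := by
          filter_upwards [ae_restrict_of_ae (hvmem k), ae_restrict_mem measurableSet_Ioc]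
            with s h1 h2
          have hsI : s ∈ Icc 0 σ := ⟨le_trans ht.1 (le_of_lt h2.1), le_trans h2.2 hhσ⟩
          have h3 := h1 hsI
          have hzX : z k s ∈ X := hSX (hzS k s hsI)
          have hdist : dist (z k s) p₀ < δ := by
            have hd1 : dist (z k s) (z k t) ≤ M * h := by
              rw [dist_eq_norm]
              calc ‖z k s - z k t‖ ≤ M * |s - t| := hlipz k t htI s hsI
                _ ≤ M * h := mul_le_mul_of_nonneg_left
                    (by rw [abs_of_nonneg (by linarith [h2.1] : (0:ℝ) ≤ s - t)]
                        linarith [h2.2]) hM0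
            have hd2 : dist (z k t) p₀ < δ/2 := by rw [← hwz2 k]; exact hk
            calc dist (z k s) p₀ ≤ dist (z k s) (z k t) + dist (z k t) p₀ :=
                  dist_triangle _ _ _
              _ < M * h + δ/2 := add_lt_add_of_le_of_lt hd1 hd2
              _ < δ := by linarith
          obtain ⟨w', hw', hdw'⟩ := husc (z k s) hzX hdist h3
          exact (hDmem _).2 ⟨w', hw', le_of_lt hdw'⟩
        have hvol : volume (Set.Ioc t (t + h)) = ENNReal.ofReal h := by
          rw [Real.volume_Ioc, add_sub_cancel_left]
        have havg := hDconv.set_average_mem hDcl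
          (by rw [hvol]; simpa using hh0)
          (by rw [hvol]; exact ENNReal.ofReal_ne_top) hmemD hintOn
        rw [setAverage_eq, measureReal_def, hvol, ENNReal.toReal_ofReal hh0.le] at havg
        rw [hIioc]
        exact havg
      have hσt : 0 < σ - t := by linarith [ht.2]
      set h₀ : ℝ := min (σ - t) (δ / (2 * (M + 1))) with hh₀def
      have hh₀pos : 0 < h₀ := lt_min hσt (by positivity)
      set uu : ℕ → ℝ := fun j => h₀ / ((j:ℝ) + 1) with huudef
      have huup : ∀ j, 0 < uu j := fun j => by positivity
      have huulim : Tendsto uu atTop (𝓝 0) := by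
        have h6 := tendsto_one_div_add_atTop_nhds_zero_nat.const_mul h₀
        simp only [mul_zero] at h6
        convert h6 using 2 with j
        rw [huudef]
        ring
      have huu_le : ∀ j, uu j ≤ h₀ := by
        intro j
        rw [huudef]
        apply div_le_self hh₀pos.le
        have := Nat.cast_nonneg (α := ℝ) j
        linarith
      have hmemj : ∀ j, (uu j)⁻¹ • (Z (t + uu j) - Z t) ∈ D := by
        intro j
        refine hquot (uu j) (huup j) ?_ ?_
        · have h7 := (huu_le j).trans (min_le_left _ _)
          linarith
        · have h7 := (huu_le j).trans (min_le_right _ _)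
          have h8 : M * uu j ≤ M * (δ / (2 * (M + 1))) :=
            mul_le_mul_of_nonneg_left h7 hM0
          have h9 : M * (δ / (2 * (M + 1))) < δ/2 := by
            rw [mul_div_assoc', div_lt_div_iff₀ (by positivity) (by norm_num : (0:ℝ) < 2)]
            nlinarith
          linarith
      have hdlim : Tendsto (fun j => (uu j)⁻¹ • (Z (t + uu j) - Z t)) atTop (𝓝 (vZ t)) :=
        tendsto_quot hd (fun j => (huup j).ne') huulim
      have hvD : vZ t ∈ D := hDcl.mem_of_tendsto hdlim (Eventually.of_forall hmemj)
      obtain ⟨w', hw', hdw'⟩ := (hDmem _).1 hvD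
      exact ⟨w', hw', lt_of_le_of_lt hdw' (by linarith)⟩
    have h1 : ∀ᵐ t : ℝ ∂volume, t ≠ σ := by
      rw [ae_iff]
      have h2 : {t : ℝ | ¬ t ≠ σ} = {σ} := by ext s; simp
      rw [h2]
      exact Real.volume_singleton
    filter_upwards [hdiff, h1] with t hdt hne htI
    exact hkey t ⟨htI.1, lt_of_le_of_ne htI.2 hne⟩ hdt
  exact ⟨Z, ⟨fun t _ => hZS t, vZ, fun a' _ b' _ => hvZint a' b', hvZmem,
    fun a' _ b' _ => hFTC a' b'⟩, hZ0, hZσ⟩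

end DInclAux
set_option maxHeartbeats 1000000 in
/-- The dual repeller of an attractor is a repeller. -/
theorem dualRep_is_repeller {n : ℕ} (X : Set (Fin n → ℝ)) (hX : IsCompact X)
    (F : (Fin n → ℝ) → Set (Fin n → ℝ)) (hF : FilippovOn F X)
    (S : Set (Fin n → ℝ)) (hSX : S ⊆ X) (hS : IsCompact S) (hSinv : IsInvSet F S)
    (A : Set (Fin n → ℝ)) (hA : IsAttractorIn F S A) :
    ∃ Ustar : Set (Fin n → ℝ), dualRep F S A ⊆ relInt S Ustar ∧ Ustar ⊆ S ∧
      alphaS F S Ustar = dualRep F S A := by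
  classical
  open DInclAux in
  obtain ⟨hAS, U, hAU, hUS, hωU⟩ := hA
  obtain ⟨Q, hQ, hQV⟩ := DInclAux.relInt_eq_open_inter S U
  have hVU : relInt S U ⊆ U := DInclAux.relInt_subset S U
  -- Step 1: absorption of `U` into its own relative interior
  obtain ⟨T, hT0, hTV⟩ := DInclAux.exists_time_subset (F := F) hS ⟨Q, hQ, hQV⟩
    (le_of_eq hωU |>.trans hAU)
  set W : Set (Fin n → ℝ) := mflowSet F S (Ici T) U with hWdef
  have hWS : W ⊆ S := DInclAux.mflowSet_subset_of_nonneg hT0 U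
  have hKV : closure W ⊆ relInt S U := hTV
  have hWV : W ⊆ relInt S U := (subset_closure).trans hKV
  have hWU : W ⊆ U := hWV.trans hVU
  -- membership lemma for W
  have hWmem : ∀ (r : ℝ) (m : Fin n → ℝ) (bb : Fin n → ℝ), T ≤ r → m ∈ U →
      bb ∈ mflow F S r m → bb ∈ W := by
    intro r m bb hTr hmU hbb
    rw [hWdef]
    simp only [mflowSet, mem_iUnion]
    exact ⟨r, hTr, m, hmU, hbb⟩
  -- basin characterization
  have basin_fwd : ∀ x, omegaS F S {x} ⊆ A →
      ∃ τ : ℝ, 0 ≤ τ ∧ ∀ r, τ ≤ r → mflow F S r x ⊆ U := by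
    intro x hx
    obtain ⟨τ, hτ0, hτ⟩ := DInclAux.exists_time_subset (F := F) hS ⟨Q, hQ, hQV⟩
      (hx.trans hAU)
    refine ⟨τ, hτ0, fun r hr => ?_⟩
    intro bb hbb
    refine hVU (subset_closure.trans hτ ?_)
    simp only [mflowSet, mem_iUnion]
    exact ⟨r, hr, x, rfl, hbb⟩
  have basin_rev : ∀ x, (∃ τ : ℝ, 0 ≤ τ ∧ ∀ r, τ ≤ r → mflow F S r x ⊆ U) →
      omegaS F S {x} ⊆ A := by
    rintro x ⟨τ, hτ0, hτ⟩ q hq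
    rw [← hωU]
    refine mem_iInter₂.2 fun t ht => ?_
    have hq' : q ∈ closure (mflowSet F S (Ici (t + τ)) {x}) :=
      mem_iInter₂.1 hq (t + τ) (by simp only [mem_Ici] at ht ⊢; linarith)
    refine closure_mono ?_ hq'
    intro yy hyy
    simp only [mflowSet, mem_iUnion] at hyy
    obtain ⟨r, hr, a, ha, hya⟩ := hyy
    simp only [mem_singleton_iff] at ha
    subst ha
    simp only [mem_Ici] at hr ht
    obtain ⟨m, hm1, hm2⟩ := DInclAux.mflow_split hya hτ0 (by linarith)
    simp only [mflowSet, mem_iUnion]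
    exact ⟨r - τ, by simp only [mem_Ici]; linarith, m, hτ τ le_rfl hm1, hm2⟩
  -- the dual repeller avoids U
  have hRU : ∀ x ∈ dualRep F S A, x ∉ U := by
    rintro x ⟨hxS, hxω⟩ hxU
    refine hxω (basin_rev x ⟨T, hT0, fun r hr => ?_⟩)
    intro bb hbb
    exact hWU (hWmem r x bb hr hxU hbb)
  set Ustar : Set (Fin n → ℝ) := S \ W with hUstar
  have hUstarS : Ustar ⊆ S := diff_subset
  -- the complement characterization
  have hcompl : ∀ (r : ℝ) (x : Fin n → ℝ), 0 ≤ r →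
      (mflow F S r x ∩ Ustar = ∅) → mflow F S r x ⊆ W := by
    intro r x hr hdisj bb hbb
    have hbS : bb ∈ S := DInclAux.mflow_subset_of_nonneg hr x hbb
    by_contra hbW
    exact (eq_empty_iff_forall_notMem.1 hdisj bb) ⟨hbb, hbS, hbW⟩
  refine ⟨Ustar, ?_, hUstarS, ?_⟩
  · -- neighborhood property
    rintro x hx
    have hxS : x ∈ S := hx.1
    refine ⟨hxS, mem_nhdsWithin.2 ⟨(closure W)ᶜ, isClosed_closure.isOpen_compl, ?_, ?_⟩⟩
    · exact fun hxK => hRU x hx (hVU (hKV hxK))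
    · intro yy hyy
      exact ⟨hyy.2, fun hyW => hyy.1 (subset_closure hyW)⟩
  · -- alphaS F S Ustar = dualRep F S A
    apply Subset.antisymm
    · -- hard direction: uses the limit-solution lemma
      intro y hy
      have hyS : y ∈ S := by
        have h1 : y ∈ closure (mflowDualSet F S (Iic (-1)) Ustar) :=
          mem_iInter₂.1 hy (-1) (by norm_num)
        refine (closure_minimal ?_ hS.isClosed) h1
        intro q hq
        simp only [mflowDualSet, mem_iUnion] at hq
        obtain ⟨s, hs, a, ha, haq⟩ := hq
        simp only [mem_setOf_eq] at haq
        simp only [mem_Iic] at hs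
        exact DInclAux.start_mem_of_mflow (by linarith) haq
      refine ⟨hyS, fun hbas => ?_⟩
      obtain ⟨τ, hτ0, hτU⟩ := basin_fwd y hbas
      set σ₀ : ℝ := τ + T with hσ₀
      have hσ₀0 : 0 ≤ σ₀ := by positivity
      have hWabs : ∀ r, σ₀ ≤ r → mflow F S r y ⊆ W := by
        intro r hr bb hbb
        obtain ⟨m, hm1, hm2⟩ := DInclAux.mflow_split hbb hτ0 (by linarith)
        exact hWmem (r - τ) m bb (by linarith) (hτU τ le_rfl hm1) hm2
      -- find bad sequences
      have hbad : ∀ k : ℕ, ∃ q, q ∈ S ∧ dist q y < 1/((k:ℝ)+1) ∧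
          ∃ r, (k:ℝ) + σ₀ ≤ r ∧ ∃ d, d ∈ mflow F S r q ∧ d ∉ W := by
        by_contra hgood
        push_neg at hgood
        obtain ⟨k, hk⟩ := hgood
        -- every point within 1/(k+1) of y is absorbed after time k + σ₀; contradict hy
        have ht0 : -((k:ℝ) + σ₀ + 1) < 0 := by
          have hp : (0:ℝ) < (k:ℝ) + σ₀ + 1 := by positivity
          linarith
        have h1 : y ∈ closure (mflowDualSet F S (Iic (-((k:ℝ) + σ₀ + 1))) Ustar) :=
          mem_iInter₂.1 hy _ ht0
        obtain ⟨q, hqE, hqd⟩ := Metric.mem_closure_iff.1 h1 (1/((k:ℝ)+1)) (by positivity)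
        simp only [mflowDualSet, mem_iUnion] at hqE
        obtain ⟨s, hs, a, ha, haq⟩ := hqE
        simp only [mem_setOf_eq] at haq
        simp only [mem_Iic] at hs
        have hr0 : (k:ℝ) + σ₀ ≤ -s := by linarith
        have hqS : q ∈ S := DInclAux.start_mem_of_mflow (by linarith) haq
        have hall := hk q hqS (by rw [dist_comm]; exact hqd) (-s) hr0
        exact ha.2 (hall a haq)
      choose q hqS hqd r hrge d hd hdW using hbad
      have hqy : Tendsto q atTop (𝓝 y) := by
        rw [tendsto_iff_dist_tendsto_zero]
        refine squeeze_zero (fun k => dist_nonneg) (fun k => (hqd k).le) ?_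
        simpa [one_div] using tendsto_one_div_add_atTop_nhds_zero_nat (𝕜 := ℝ)
      have hsplit : ∀ k : ℕ, ∃ ee, ee ∈ mflow F S σ₀ (q k) ∧
          d k ∈ mflow F S (r k - σ₀) ee := by
        intro k
        exact DInclAux.mflow_split (hd k) hσ₀0
          (by have := hrge k; have : (0:ℝ) ≤ k := Nat.cast_nonneg k; linarith [hrge k])
      choose ee hee1 hee2 using hsplit
      have heeS : ∀ k, ee k ∈ S := fun k =>
        DInclAux.mflow_subset_of_nonneg hσ₀0 _ (hee1 k)
      obtain ⟨l, hlS, φ, hφ, hφlim⟩ := hS.tendsto_subseq heeS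
      have hlmf : l ∈ mflow F S σ₀ y :=
        DInclAux.mflow_limit hX hF hS hSX hσ₀0 (hqy.comp hφ.tendsto_atTop) hφlim
          (fun k => hee1 (φ k))
      have hlQ : l ∈ Q := by
        have : l ∈ relInt S U := hWV (hWabs σ₀ le_rfl hlmf)
        rw [hQV] at this
        exact this.1
      have hev : ∀ᶠ k in atTop, ee (φ k) ∈ Q := hφlim.eventually (hQ.mem_nhds hlQ)
      obtain ⟨k₁, hk₁⟩ := eventually_atTop.1 hev
      set k := max k₁ ⌈T⌉₊ with hkdef
      have he1 : ee (φ k) ∈ U := by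
        have hQk : ee (φ k) ∈ Q := hk₁ k (le_max_left _ _)
        have : ee (φ k) ∈ relInt S U := by rw [hQV]; exact ⟨hQk, heeS (φ k)⟩
        exact hVU this
      have he2 : T ≤ r (φ k) - σ₀ := by
        have h1 : (⌈T⌉₊ : ℝ) ≤ (φ k : ℝ) := by
          exact_mod_cast Nat.cast_le.2 ((le_max_right k₁ ⌈T⌉₊).trans hφ.le_apply)
        have h2 := hrge (φ k)
        have h3 : T ≤ (⌈T⌉₊ : ℝ) := Nat.le_ceil T
        linarith
      exact hdW (φ k) (hWmem _ _ _ he2 he1 (hee2 (φ k)))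
    · -- easy direction: dualRep ⊆ alphaS
      rintro x ⟨hxS, hxω⟩
      refine mem_iInter₂.2 fun t ht => subset_closure ?_
      simp only [mem_Iio] at ht
      simp only [mflowDualSet, mem_iUnion]
      by_contra hcon
      push_neg at hcon
      refine hxω (basin_rev x ⟨-t, by linarith, fun r hr => ?_⟩)
      intro bb hbb
      refine hWU (hcompl r x (by linarith) ?_ hbb)
      rw [eq_empty_iff_forall_notMem]
      rintro a ⟨ha1, ha2⟩
      refine hcon (-r) (by simp only [mem_Iic]; linarith) a ha2 ?_
      simp only [mem_setOf_eq, neg_neg]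
      exact ha1
  -- redundant marker
end

section
/- Let S be a compact invariant set for the multiflow Φ of a differential inclusion, A an attractor in S, and R its dual repeller. Then the connecting region C(A,R) := S \ (A ∪ R) equals {x ∈ S | ω_S(x) ⊂ A and α_S(x) ⊂ R}. -/
open Set MeasureTheory Filter Topology

open DIncl Set MeasureTheory Filter Topology

namespace ConnectingRegionProof

open scoped NNReal

variable {n : ℕ} {F : (Fin n → ℝ) → Set (Fin n → ℝ)} {X S : Set (Fin n → ℝ)}

/-! ### Elementary lemmas about solutions -/

theorem solOn_mono {y : ℝ → Fin n → ℝ} {I J : Set ℝ} (hIJ : I ⊆ J)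
    (h : IsSolOn F X y J) : IsSolOn F X y I := by
  obtain ⟨hm, v, hi, hae, heq⟩ := h
  exact ⟨fun t ht => hm t (hIJ ht), v, fun a ha b hb => hi a (hIJ ha) b (hIJ hb),
    hae.mono fun t ht hI => ht (hIJ hI), fun a ha b hb => heq a (hIJ ha) b (hIJ hb)⟩

theorem solOn_shift {y : ℝ → Fin n → ℝ} {s σ T : ℝ} (hσ : 0 ≤ σ) (hT : 0 ≤ T)
    (hs : σ + T ≤ s) (h : IsSolOn F X y (Icc 0 s)) :
    IsSolOn F X (fun τ => y (σ + τ)) (Icc 0 T) := by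
  obtain ⟨hm, v, hi, hae, heq⟩ := h
  have hsub : ∀ τ ∈ Icc (0:ℝ) T, σ + τ ∈ Icc 0 s := fun τ hτ =>
    ⟨by linarith [hτ.1], by linarith [hτ.2]⟩
  refine ⟨fun τ hτ => hm _ (hsub τ hτ), fun τ => v (σ + τ), ?_, ?_, ?_⟩
  · intro a ha b hb
    have h1 := (hi _ (hsub a ha) _ (hsub b hb)).comp_add_left σ
    simpa using h1
  · have hq : Measure.QuasiMeasurePreserving (fun τ : ℝ => σ + τ) volume volume :=
      (measurePreserving_add_left volume σ).quasiMeasurePreserving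
    exact (hq.ae hae).mono fun τ h hτ => h (hsub τ hτ)
  · intro a ha b hb
    have h1 := heq _ (hsub a ha) _ (hsub b hb)
    rw [intervalIntegral.integral_comp_add_left (fun t => v t) σ]
    exact h1

theorem mem_mflow_of_sol {y : ℝ → Fin n → ℝ} {s σ τ : ℝ} (h : IsSolOn F X y (Icc 0 s))
    (h0 : 0 ≤ σ) (hστ : σ ≤ τ) (hτs : τ ≤ s) : y τ ∈ mflow F X (τ - σ) (y σ) := by
  refine ⟨fun r => y (σ + r), solOn_shift h0 (by linarith) (by linarith) h, by simp, by simp⟩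

theorem mem_mflow_self_of_inv (hSinv : IsInvSet F S) {z : Fin n → ℝ} (hz : z ∈ S) {T : ℝ}
    (hT : 0 ≤ T) : ∃ b, b ∈ mflow F S T z := by
  obtain ⟨ψ, hψ, hψ0⟩ := hSinv hz
  have h := mem_mflow_of_sol (s := T) (σ := 0) (τ := T)
    (solOn_mono (subset_univ _) hψ) le_rfl hT le_rfl
  rw [hψ0, sub_zero] at h
  exact ⟨ψ T, h⟩

theorem mflow_subset {T : ℝ} (hT : 0 ≤ T) (a : Fin n → ℝ) : mflow F S T a ⊆ S := by
  rintro b ⟨y, hy, -, rfl⟩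
  exact hy.1 T ⟨hT, le_rfl⟩

theorem mflow_start {T : ℝ} (hT : 0 ≤ T) {a b : Fin n → ℝ} (h : b ∈ mflow F S T a) : a ∈ S := by
  obtain ⟨y, hy, h0, -⟩ := h
  rw [← h0]; exact hy.1 0 ⟨le_rfl, hT⟩

theorem mflowSet_subset {I : Set ℝ} (hI : I ⊆ Ici 0) (U : Set (Fin n → ℝ)) :
    mflowSet F S I U ⊆ S := by
  intro b hb
  simp only [mflowSet, mem_iUnion] at hb
  obtain ⟨t, ht, a, -, hmem⟩ := hb
  exact mflow_subset (hI ht) a hmem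

theorem omegaS_mono {U U' : Set (Fin n → ℝ)} (h : U ⊆ U') : omegaS F S U ⊆ omegaS F S U' := by
  refine iInter₂_mono fun t ht => closure_mono ?_
  refine iUnion₂_mono fun s hs => iUnion_mono fun a => iUnion_mono' fun ha => ⟨h ha, subset_rfl⟩

theorem mem_omegaS_of_large_times {U : Set (Fin n → ℝ)} {x : Fin n → ℝ}
    (h : ∀ τ : ℝ, 0 ≤ τ → ∃ s, τ ≤ s ∧ ∃ b ∈ U, x ∈ mflow F S s b) : x ∈ omegaS F S U := by
  refine mem_iInter₂.2 fun t ht => subset_closure ?_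
  obtain ⟨s, hs, b, hb, hmem⟩ := h t ht
  simp only [mflowSet, mem_iUnion]
  exact ⟨s, hs, b, hb, hmem⟩

theorem isClosed_omegaS (U : Set (Fin n → ℝ)) : IsClosed (omegaS F S U) :=
  isClosed_biInter fun t ht => isClosed_closure

theorem alphaS_subset_S (hS : IsCompact S) (x : Fin n → ℝ) : alphaS F S {x} ⊆ S := by
  intro z hz
  have h1 : z ∈ closure (mflowDualSet F S (Iic (-1 : ℝ)) {x}) := by
    exact mem_iInter₂.1 hz (-1) (by norm_num)
  have h2 : mflowDualSet F S (Iic (-1 : ℝ)) {x} ⊆ S := by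
    intro b hb
    simp only [mflowDualSet, mem_iUnion, mem_singleton_iff] at hb
    obtain ⟨t, ht, a, rfl, hmem⟩ := hb
    exact mflow_start (by simp only [mem_Iic] at ht; linarith) hmem
  exact hS.isClosed.closure_subset_iff.2 h2 h1

theorem relInt_subset {U : Set (Fin n → ℝ)} : relInt S U ⊆ U := fun x hx =>
  mem_of_mem_nhdsWithin hx.1 hx.2

theorem exists_open_of_relInt {A U : Set (Fin n → ℝ)} (h : A ⊆ relInt S U) :
    ∃ V, IsOpen V ∧ A ⊆ V ∧ V ∩ S ⊆ U := by
  have key : ∀ a ∈ A, ∃ v : Set (Fin n → ℝ), IsOpen v ∧ a ∈ v ∧ v ∩ S ⊆ U := by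
    intro a ha
    rcases mem_nhdsWithin.mp (h ha).2 with ⟨v, hv, hav, hsub⟩
    exact ⟨v, hv, hav, hsub⟩
  choose! V hVo haV hVU using key
  refine ⟨⋃ a ∈ A, V a, isOpen_biUnion fun a ha => hVo a ha, fun a ha => ?_, ?_⟩
  · exact mem_biUnion ha (haV a ha)
  · rintro z ⟨hzV, hzS⟩
    simp only [mem_iUnion] at hzV
    obtain ⟨a, ha, hza⟩ := hzV
    exact hVU a ha ⟨hza, hzS⟩

/-! ### Bound on the right-hand sides -/

theorem exists_bound (hX : IsCompact X) (hF : FilippovOn F X) :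
    ∃ M : ℝ, 0 ≤ M ∧ ∀ p ∈ X, ∀ w ∈ F p, ‖w‖ ≤ M := by
  have key : ∀ p ∈ X, ∃ δ > 0, ∃ C : ℝ, ∀ q ∈ X, dist q p < δ → ∀ w ∈ F q, ‖w‖ ≤ C := by
    intro p hp
    obtain ⟨C, hC⟩ := isBounded_iff_forall_norm_le.mp (hF.2 p hp).1.isBounded
    obtain ⟨δ, hδ0, hδ⟩ := hF.1 p hp 1 one_pos
    refine ⟨δ, hδ0, C + 1, fun q hq hdist w hw => ?_⟩
    obtain ⟨u, huF, hu⟩ := hδ q hq hdist hw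
    calc ‖w‖ ≤ ‖u‖ + dist w u := by
          rw [dist_eq_norm, add_comm]
          have := norm_add_le (w - u) u
          simpa using this
      _ ≤ C + 1 := add_le_add (hC u huF) hu.le
  choose! δ hδ0 C hC using key
  have hcover : X ⊆ ⋃ p ∈ X, Metric.ball p (δ p) := fun p hp =>
    mem_biUnion hp (Metric.mem_ball_self (hδ0 p hp))
  obtain ⟨s, hsX, hsfin, hsub⟩ := hX.elim_finite_subcover_image
    (fun p hp => Metric.isOpen_ball) hcover
  obtain ⟨M0, hM0⟩ := (hsfin.image C).bddAbove
  refine ⟨max M0 0, le_max_right _ _, fun p hp w hw => ?_⟩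
  obtain ⟨q, hq, hpq⟩ := by
    have := hsub hp
    simpa only [mem_iUnion, exists_prop] using this
  have h1 : ‖w‖ ≤ C q := hC q (hsX hq) p hp (by simpa [Metric.mem_ball] using hpq) w hw
  have h2 : C q ≤ M0 := hM0 (mem_image_of_mem C hq)
  exact h1.trans (h2.trans (le_max_left _ _))

theorem sol_dist_le (hSX : S ⊆ X) {M : ℝ} (hM : ∀ p ∈ X, ∀ w ∈ F p, ‖w‖ ≤ M)
    {y v : ℝ → Fin n → ℝ} {T : ℝ}
    (hmem : ∀ t ∈ Icc (0:ℝ) T, y t ∈ S)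
    (hae : ∀ᵐ t ∂volume, t ∈ Icc (0:ℝ) T → v t ∈ F (y t))
    (heq : ∀ a ∈ Icc (0:ℝ) T, ∀ b ∈ Icc (0:ℝ) T, y b = y a + ∫ t in a..b, v t)
    {a b : ℝ} (ha : a ∈ Icc (0:ℝ) T) (hb : b ∈ Icc (0:ℝ) T) :
    dist (y b) (y a) ≤ M * |b - a| := by
  have hsub : Set.uIoc a b ⊆ Icc (0:ℝ) T := by
    intro t ht
    rcases ht with ⟨h1, h2⟩
    constructor
    · have : (0:ℝ) ≤ min a b := le_min ha.1 hb.1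
      linarith
    · have : max a b ≤ T := max_le ha.2 hb.2
      linarith
  have hbound : ∀ᵐ t ∂volume, t ∈ Set.uIoc a b → ‖v t‖ ≤ M := by
    filter_upwards [hae] with t ht hI
    exact hM (y t) (hSX (hmem t (hsub hI))) (v t) (ht (hsub hI))
  have h1 : y b - y a = ∫ t in a..b, v t := by rw [heq a ha b hb]; abel
  rw [dist_eq_norm, h1]
  exact intervalIntegral.norm_integral_le_of_norm_le_const_ae hbound

end ConnectingRegionProof

namespace ConnectingRegionProof

theorem tendsto_slope_seq {n : ℕ} {f : ℝ → Fin n → ℝ} {c : ℝ} {L : Fin n → ℝ}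
    (hd : HasDerivAt f L c) {u : ℕ → ℝ} (hu0 : ∀ k, u k ≠ 0)
    (hu : Tendsto u atTop (𝓝 0)) :
    Tendsto (fun k => (u k)⁻¹ • (f (c + u k) - f c)) atTop (𝓝 L) := by
  have h1 := hasDerivAt_iff_tendsto_slope.mp hd
  have h2 : Tendsto (fun k => c + u k) atTop (𝓝[≠] c) := by
    refine tendsto_nhdsWithin_of_tendsto_nhds_of_eventually_within _ ?_ ?_
    · simpa using tendsto_const_nhds.add hu
    · exact Eventually.of_forall fun k => by simp [hu0 k]
  have h3 := h1.comp h2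
  refine h3.congr fun k => ?_
  simp [Function.comp, slope_def_module]

variable {n : ℕ} {F : (Fin n → ℝ) → Set (Fin n → ℝ)} {X S : Set (Fin n → ℝ)}

theorem funnel (hX : IsCompact X) (hF : FilippovOn F X) (hS : IsCompact S) (hSX : S ⊆ X)
    {T : ℝ} (hT : 0 ≤ T) (y : ℕ → ℝ → Fin n → ℝ) (hy : ∀ k, IsSolOn F S (y k) (Icc 0 T))
    (𝒰 : Ultrafilter ℕ) :
    ∃ γ : ℝ → Fin n → ℝ, IsSolOn F S γ (Icc 0 T) ∧
      ∀ t ∈ Icc (0:ℝ) T, Tendsto (fun k => y k t) (𝒰 : Filter ℕ) (𝓝 (γ t)) := by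
  classical
  obtain ⟨M, hM0, hMb⟩ := exists_bound hX hF
  choose vv hvint hvae hveq using fun k => (hy k).2
  have hymem : ∀ k, ∀ t ∈ Icc (0:ℝ) T, y k t ∈ S := fun k => (hy k).1
  have hylip : ∀ k, ∀ a ∈ Icc (0:ℝ) T, ∀ b ∈ Icc (0:ℝ) T,
      dist (y k b) (y k a) ≤ M * |b - a| :=
    fun k a ha b hb => sol_dist_le hSX hMb (hymem k) (hvae k) (hveq k) ha hb
  -- the clamp map
  set cl : ℝ → ℝ := fun t => max 0 (min t T) with hcl
  have hclmem : ∀ t, cl t ∈ Icc (0:ℝ) T := fun t =>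
    ⟨le_max_left _ _, max_le hT (min_le_right _ _)⟩
  have hcleq : ∀ t ∈ Icc (0:ℝ) T, cl t = t := fun t ht => by
    simp only [hcl]
    rw [min_eq_left ht.2, max_eq_right ht.1]
  have hcllip : ∀ s t : ℝ, |cl s - cl t| ≤ |s - t| := by
    intro s t
    have h1 : |max 0 (min s T) - max 0 (min t T)| ≤ |min s T - min t T| := by
      simpa [max_comm] using abs_max_sub_max_le_abs (min s T) (min t T) 0
    have h2 : |min s T - min t T| ≤ max |s - t| |T - T| := abs_min_sub_min_le_max s T t T
    simp only [sub_self, abs_zero, max_eq_left (abs_nonneg (s - t))] at h2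
    exact h1.trans h2
  -- ultrafilter limits
  have hkey : ∀ t : ℝ, ∃ p ∈ S, Tendsto (fun k => y k (cl t)) (𝒰 : Filter ℕ) (𝓝 p) := by
    intro t
    have hle : ↑(𝒰.map fun k => y k (cl t)) ≤ 𝓟 S := by
      rw [Ultrafilter.coe_map, le_principal_iff, mem_map]
      exact univ_mem' fun k => hymem k (cl t) (hclmem t)
    obtain ⟨p, hpS, hp⟩ := hS.ultrafilter_le_nhds _ hle
    exact ⟨p, hpS, hp⟩
  choose γ hγS hγtend using hkey
  have hγt : ∀ t ∈ Icc (0:ℝ) T, Tendsto (fun k => y k t) (𝒰 : Filter ℕ) (𝓝 (γ t)) := by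
    intro t ht
    have := hγtend t
    rwa [hcleq t ht] at this
  -- Lipschitz bound for γ
  have hγlip : ∀ s t : ℝ, dist (γ s) (γ t) ≤ M * |s - t| := by
    intro s t
    have h1 : Tendsto (fun k => dist (y k (cl s)) (y k (cl t))) (𝒰 : Filter ℕ)
        (𝓝 (dist (γ s) (γ t))) := (hγtend s).dist (hγtend t)
    refine le_of_tendsto h1 (Eventually.of_forall fun k => ?_)
    calc dist (y k (cl s)) (y k (cl t)) ≤ M * |cl s - cl t| :=
          hylip k (cl t) (hclmem t) (cl s) (hclmem s)
      _ ≤ M * |s - t| := mul_le_mul_of_nonneg_left (hcllip s t) hM0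
  have hγlipW : LipschitzWith (⟨M, hM0⟩ : NNReal) γ :=
    LipschitzWith.of_dist_le_mul fun s t => by
      rw [Real.dist_eq]; exact hγlip s t
  have hγcont : Continuous γ := hγlipW.continuous
  have hslope_norm : ∀ (t h : ℝ), h ≠ 0 → ‖h⁻¹ • (γ (t + h) - γ t)‖ ≤ M := by
    intro t h hh
    rw [norm_smul, norm_inv, Real.norm_eq_abs]
    have h2 : ‖γ (t + h) - γ t‖ ≤ M * |h| := by
      have := hγlip (t + h) t
      rwa [dist_eq_norm, add_sub_cancel_left] at this
    calc |h|⁻¹ * ‖γ (t + h) - γ t‖ ≤ |h|⁻¹ * (M * |h|) :=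
          mul_le_mul_of_nonneg_left h2 (inv_nonneg.2 (abs_nonneg h))
      _ = M := by
          field_simp
  -- the a.e. derivative
  have hdiff : ∀ᵐ t : ℝ, DifferentiableAt ℝ γ t := hγlipW.ae_differentiableAt_real
  set v : ℝ → Fin n → ℝ := deriv γ with hv
  have hvmeas : Measurable v := measurable_deriv γ
  have hder : ∀ᵐ t : ℝ, HasDerivAt γ (v t) t := hdiff.mono fun t h => h.hasDerivAt
  -- the standard sequence of increments
  set u : ℕ → ℝ := fun k => ((k : ℝ) + 1)⁻¹ with hu
  have hupos : ∀ k, (0:ℝ) < u k := fun k => by positivity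
  have hu0 : ∀ k, u k ≠ 0 := fun k => (hupos k).ne'
  have hutend : Tendsto u atTop (𝓝 0) := by
    simpa [hu, one_div] using tendsto_one_div_add_atTop_nhds_zero_nat (𝕜 := ℝ)
  -- norm bound on v
  have hvbdd : ∀ᵐ t : ℝ, ‖v t‖ ≤ M := by
    filter_upwards [hder] with t hd
    have h1 := tendsto_slope_seq hd hu0 hutend
    exact le_of_tendsto h1.norm (Eventually.of_forall fun k => hslope_norm t (u k) (hu0 k))
  -- interval integrability of v
  have hvint' : ∀ a b : ℝ, IntervalIntegrable v volume a b := by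
    intro a b
    rw [intervalIntegrable_iff]
    haveI : Fact (volume (Set.uIoc a b) < ⊤) := ⟨measure_Ioc_lt_top⟩
    exact ⟨hvmeas.aestronglyMeasurable.restrict,
      HasFiniteIntegral.of_bounded (ae_restrict_of_ae hvbdd)⟩
  -- fundamental theorem of calculus for γ
  have hγint : ∀ a b : ℝ, IntervalIntegrable γ volume a b := fun a b =>
    hγcont.intervalIntegrable a b
  set g : ℝ → Fin n → ℝ := fun w => ∫ s in (0:ℝ)..w, γ s with hg
  have hgder : ∀ w : ℝ, HasDerivAt g (γ w) w := fun w =>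
    intervalIntegral.integral_hasDerivAt_right (hγint 0 w)
      (hγcont.stronglyMeasurable.stronglyMeasurableAtFilter) hγcont.continuousAt
  have hadd : ∀ c d : ℝ, (∫ s in c..d, γ s) = g d - g c := by
    intro c d
    have h1 := intervalIntegral.integral_add_adjacent_intervals (hγint 0 c) (hγint c d)
    simp only [hg]
    rw [← h1]
    abel
  have hftc : ∀ a b : ℝ, γ b = γ a + ∫ t in a..b, v t := by
    intro a b
    have hInt : ∀ k, (∫ t in a..b, (u k)⁻¹ • (γ (t + u k) - γ t))
        = (u k)⁻¹ • (g (b + u k) - g b) - (u k)⁻¹ • (g (a + u k) - g a) := by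
      intro k
      have hcomp : Continuous fun t : ℝ => γ (t + u k) :=
        hγcont.comp (continuous_id.add continuous_const)
      rw [intervalIntegral.integral_smul]
      rw [intervalIntegral.integral_sub (hcomp.intervalIntegrable a b) (hγint a b)]
      rw [intervalIntegral.integral_comp_add_right γ (u k)]
      rw [hadd (a + u k) (b + u k), hadd a b]
      rw [← smul_sub]
      congr 1
      abel
    have hDCT : Tendsto (fun k => ∫ t in a..b, (u k)⁻¹ • (γ (t + u k) - γ t)) atTop
        (𝓝 (∫ t in a..b, v t)) := by
      apply intervalIntegral.tendsto_integral_filter_of_dominated_convergence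
        (F := fun k t => (u k)⁻¹ • (γ (t + u k) - γ t)) (bound := fun _ => M)
      · refine Eventually.of_forall fun k => Continuous.aestronglyMeasurable ?_ |>.restrict
        fun_prop
      · exact Eventually.of_forall fun k =>
          Eventually.of_forall fun t _ => hslope_norm t (u k) (hu0 k)
      · exact intervalIntegrable_const
      · filter_upwards [hder] with t hd _
        exact tendsto_slope_seq hd hu0 hutend
    have h5 : Tendsto (fun k => (u k)⁻¹ • (g (b + u k) - g b) - (u k)⁻¹ • (g (a + u k) - g a))
        atTop (𝓝 (γ b - γ a)) :=
      (tendsto_slope_seq (hgder b) hu0 hutend).sub (tendsto_slope_seq (hgder a) hu0 hutend)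
    have hDCT' : Tendsto (fun k => (u k)⁻¹ • (g (b + u k) - g b) - (u k)⁻¹ • (g (a + u k) - g a))
        atTop (𝓝 (∫ t in a..b, v t)) := by
      refine Tendsto.congr (fun k => hInt k) hDCT
    have h6 : (∫ t in a..b, v t) = γ b - γ a := tendsto_nhds_unique hDCT' h5
    rw [h6]
    abel
  -- the differential inclusion a.e.
  have hincl0 : ∀ᵐ t : ℝ, t ∈ Ico (0:ℝ) T → v t ∈ F (γ t) := by
    filter_upwards [hder] with t hd ht
    obtain ⟨ht0, htT⟩ := ht
    have hγtS : γ t ∈ S := hγS t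
    have hγtX : γ t ∈ X := hSX hγtS
    obtain ⟨hCc, hCconv, -⟩ := hF.2 (γ t) hγtX
    have key : ∀ ε > 0, v t ∈ Metric.cthickening ε (F (γ t)) := by
      intro ε hε
      obtain ⟨δ, hδ0, hδ⟩ := hF.1 (γ t) hγtX ε hε
      set h₀ : ℝ := min (T - t) (δ / (2 * (M + 1))) with hh₀def
      have hh₀ : 0 < h₀ := lt_min (by linarith) (by positivity)
      have hstep : ∀ h : ℝ, 0 < h → h ≤ h₀ →
          h⁻¹ • (γ (t + h) - γ t) ∈ Metric.cthickening ε (F (γ t)) := by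
        intro h hh hhle
        have hth : t + h ≤ T := by
          have := hhle.trans (min_le_left _ _)
          linarith
        have hMh : M * h < δ / 2 := by
          have h1 : h ≤ δ / (2 * (M + 1)) := hhle.trans (min_le_right _ _)
          have h2 : h * (2 * (M + 1)) ≤ δ := by
            rw [← le_div_iff₀ (by positivity : (0:ℝ) < 2 * (M + 1))]
            exact h1
          nlinarith [h2, hh, hM0]
        have htmem : t ∈ Icc (0:ℝ) T := ⟨ht0, le_of_lt htT⟩
        have hthmem : t + h ∈ Icc (0:ℝ) T := ⟨by linarith, hth⟩
        have hG : ∀ᶠ k in (𝒰 : Filter ℕ), dist (y k t) (γ t) < δ / 2 :=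
          (Metric.tendsto_nhds.mp (hγt t htmem)) (δ / 2) (by positivity)
        have hQ : ∀ k, dist (y k t) (γ t) < δ / 2 →
            h⁻¹ • (y k (t + h) - y k t) ∈ Metric.cthickening ε (F (γ t)) := by
          intro k hk
          have heqk := hveq k t htmem (t + h) hthmem
          have hsubk : y k (t + h) - y k t = ∫ s in t..(t + h), vv k s := by
            rw [heqk]; abel
          have hvol : volume (Ioc t (t + h)) = ENNReal.ofReal h := by
            rw [Real.volume_Ioc]
            congr 1
            ring
          have havg : h⁻¹ • (y k (t + h) - y k t) = ⨍ s in Ioc t (t + h), vv k s ∂volume := by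
            rw [hsubk, setAverage_eq, measureReal_def, hvol, ENNReal.toReal_ofReal hh.le,
              intervalIntegral.integral_of_le (by linarith : t ≤ t + h)]
          rw [havg]
          refine (hCconv.cthickening ε).set_average_mem Metric.isClosed_cthickening ?_ ?_ ?_ ?_
          · rw [hvol]
            simp only [ne_eq, ENNReal.ofReal_eq_zero, not_le]
            linarith
          · exact measure_Ioc_lt_top.ne
          · filter_upwards [ae_restrict_of_ae (hvae k), ae_restrict_mem measurableSet_Ioc]
              with s hs hsIoc
            have hsmem : s ∈ Icc (0:ℝ) T := ⟨by linarith [hsIoc.1], by linarith [hsIoc.2]⟩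
            have h1 := hs hsmem
            have hyS : y k s ∈ S := hymem k s hsmem
            have hdist : dist (y k s) (γ t) < δ := by
              have h2 : dist (y k s) (y k t) ≤ M * |s - t| := hylip k t htmem s hsmem
              have h3 : |s - t| ≤ h := by
                rw [abs_of_pos (by linarith [hsIoc.1] : (0:ℝ) < s - t)]
                linarith [hsIoc.2]
              have h4 : M * |s - t| ≤ M * h := mul_le_mul_of_nonneg_left h3 hM0
              calc dist (y k s) (γ t) ≤ dist (y k s) (y k t) + dist (y k t) (γ t) :=
                    dist_triangle _ _ _
                _ < δ / 2 + δ / 2 := by linarith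
                _ = δ := by ring
            obtain ⟨w, hwC, hw⟩ := hδ (y k s) (hSX hyS) hdist h1
            exact Metric.mem_cthickening_of_dist_le _ w ε _ hwC hw.le
          · exact (hvint k t htmem (t + h) hthmem).1
        have htend : Tendsto (fun k => h⁻¹ • (y k (t + h) - y k t)) (𝒰 : Filter ℕ)
            (𝓝 (h⁻¹ • (γ (t + h) - γ t))) :=
          ((hγt (t + h) hthmem).sub (hγt t htmem)).const_smul _
        exact Metric.isClosed_cthickening.mem_of_tendsto htend (hG.mono hQ)
      set w : ℕ → ℝ := fun k => h₀ * ((k : ℝ) + 1)⁻¹ with hwdef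
      have hwpos : ∀ k, 0 < w k := fun k => by positivity
      have hwle : ∀ k, w k ≤ h₀ := by
        intro k
        have h1 : ((k:ℝ) + 1)⁻¹ ≤ 1 := by
          rw [inv_le_one_iff₀]
          right
          simp [Nat.cast_nonneg]
        calc w k = h₀ * ((k:ℝ) + 1)⁻¹ := rfl
          _ ≤ h₀ * 1 := mul_le_mul_of_nonneg_left h1 hh₀.le
          _ = h₀ := mul_one _
      have hwtend : Tendsto w atTop (𝓝 0) := by
        have h2 : Tendsto (fun k : ℕ => h₀ * (1 / ((k:ℝ) + 1))) atTop (𝓝 (h₀ * 0)) :=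
          tendsto_one_div_add_atTop_nhds_zero_nat.const_mul h₀
        simpa [hwdef, one_div] using h2
      have hlim := tendsto_slope_seq hd (fun k => (hwpos k).ne') hwtend
      exact Metric.isClosed_cthickening.mem_of_tendsto hlim
        (Eventually.of_forall fun k => hstep (w k) (hwpos k) (hwle k))
    have hclmemF : v t ∈ closure (F (γ t)) := by
      rw [Metric.closure_eq_iInter_cthickening]
      exact mem_iInter₂.2 fun ε hε => key ε hε
    rwa [hCc.isClosed.closure_eq] at hclmemF
  have hTnull : ∀ᵐ s : ℝ, s ≠ T := by
    rw [ae_iff]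
    have hset : {s : ℝ | ¬ s ≠ T} = {T} := by
      ext s
      simp
    rw [hset]
    exact measure_singleton T
  have hincl : ∀ᵐ t : ℝ, t ∈ Icc (0:ℝ) T → v t ∈ F (γ t) := by
    filter_upwards [hincl0, hTnull] with t h1 h2 ht
    exact h1 ⟨ht.1, lt_of_le_of_ne ht.2 h2⟩
  exact ⟨γ, ⟨fun t _ => hγS t, v, fun a _ b _ => hvint' a b, hincl, fun a _ b _ => hftc a b⟩, hγt⟩

end ConnectingRegionProof

namespace ConnectingRegionProof

variable {n : ℕ} {F : (Fin n → ℝ) → Set (Fin n → ℝ)} {X S : Set (Fin n → ℝ)}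

theorem mflowSet_mono_left {I J : Set ℝ} (h : I ⊆ J) (U : Set (Fin n → ℝ)) :
    mflowSet F S I U ⊆ mflowSet F S J U :=
  iUnion₂_mono' fun t ht => ⟨t, h ht, subset_rfl⟩

theorem exists_tail_in_open (hS : IsCompact S) {z : Fin n → ℝ}
    {V : Set (Fin n → ℝ)} (hV : IsOpen V) (hωz : omegaS F S {z} ⊆ V) :
    ∃ m : ℕ, closure (mflowSet F S (Ici (m:ℝ)) {z}) ⊆ V := by
  by_contra hcon
  push_neg at hcon
  set K : ℕ → Set (Fin n → ℝ) := fun m => closure (mflowSet F S (Ici (m:ℝ)) {z}) \ V with hK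
  have hKne : ∀ m, (K m).Nonempty := by
    intro m
    rcases not_subset.mp (hcon m) with ⟨q, hq1, hq2⟩
    exact ⟨q, hq1, hq2⟩
  have hKsubS : ∀ m, K m ⊆ S := by
    intro m
    refine diff_subset.trans ?_
    exact hS.isClosed.closure_subset_iff.2
      (mflowSet_subset (fun t ht => mem_Ici.mpr (le_trans (Nat.cast_nonneg (α := ℝ) m) (mem_Ici.mp ht))) _)
  have hKcl : ∀ m, IsClosed (K m) := fun m => isClosed_closure.sdiff hV
  have hKcomp : IsCompact (K 0) := hS.of_isClosed_subset (hKcl 0) (hKsubS 0)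
  have hKmono : ∀ m, K (m + 1) ⊆ K m := by
    intro m
    apply diff_subset_diff_left
    apply closure_mono
    apply mflowSet_mono_left
    intro t ht
    have : ((m:ℝ)) ≤ ((m:ℝ) + 1) := by linarith
    exact mem_Ici.mpr (le_trans (by exact_mod_cast this) (mem_Ici.mp ht))
  obtain ⟨q, hq⟩ := IsCompact.nonempty_iInter_of_sequence_nonempty_isCompact_isClosed
    K hKmono hKne hKcomp hKcl
  have hqω : q ∈ omegaS F S {z} := by
    refine mem_iInter₂.2 fun t ht => ?_
    have hm := mem_iInter.1 hq ⌈t⌉₊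
    refine closure_mono (mflowSet_mono_left (fun r hr => le_trans (Nat.le_ceil t) hr) _) hm.1
  exact (mem_iInter.1 hq 0).2 (hωz hqω)

theorem dir1 (hX : IsCompact X) (hF : FilippovOn F X) (hS : IsCompact S) (hSX : S ⊆ X)
    (hSinv : IsInvSet F S) {A U : Set (Fin n → ℝ)} (hU1 : A ⊆ relInt S U) (hU2 : U ⊆ S)
    (hU3 : omegaS F S U = A) {x : Fin n → ℝ} (hxS : x ∈ S) (hxA : x ∉ A) :
    alphaS F S {x} ⊆ dualRep F S A := by
  intro z hz
  have hzS : z ∈ S := alphaS_subset_S hS x hz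
  refine ⟨hzS, ?_⟩
  intro hωz
  obtain ⟨V, hVo, hAV, hVU⟩ := exists_open_of_relInt hU1
  obtain ⟨m, hm⟩ := exists_tail_in_open (F := F) hS hVo (hωz.trans hAV)
  set t₀ : ℝ := (m : ℝ) with ht₀def
  have ht₀ : 0 ≤ t₀ := Nat.cast_nonneg m
  have hext : ∀ k : ℕ, ∃ b : Fin n → ℝ, ∃ τ : ℝ, ∃ yy : ℝ → Fin n → ℝ, dist z b < ((k:ℝ) + 1)⁻¹ ∧
      t₀ + (k:ℝ) + 1 ≤ τ ∧ IsSolOn F S yy (Icc 0 τ) ∧ yy 0 = b ∧ yy τ = x := by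
    intro k
    have hneg : -(t₀ + (k:ℝ) + 1) ∈ Iio (0:ℝ) := by
      have : (0:ℝ) ≤ (k:ℝ) := Nat.cast_nonneg k
      simp only [mem_Iio]
      linarith
    have h1 : z ∈ closure (mflowDualSet F S (Iic (-(t₀ + (k:ℝ) + 1))) {x}) :=
      mem_iInter₂.1 hz _ hneg
    obtain ⟨b, hbD, hbdist⟩ := Metric.mem_closure_iff.1 h1 (((k:ℝ) + 1)⁻¹) (by positivity)
    simp only [mflowDualSet, mem_iUnion, mem_singleton_iff, exists_prop,
      mem_setOf_eq, mem_Iic] at hbD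
    obtain ⟨sv, hsv, hmem⟩ := hbD
    obtain ⟨a, rfl, hmem2⟩ := hmem
    have hmem' : ∃ yy : ℝ → Fin n → ℝ, IsSolOn F S yy (Icc 0 (-sv)) ∧ yy 0 = b ∧ yy (-sv) = a :=
      hmem2
    obtain ⟨yy, hyy, hyy0, hyyτ⟩ := hmem'
    refine ⟨b, -sv, yy, hbdist, by linarith, hyy, hyy0, hyyτ⟩
  choose b τ yy hbdist hτ hsol hy0 hyτ using hext
  have hτ0 : ∀ k, t₀ ≤ τ k := by
    intro k
    have h1 := hτ k
    have : (0:ℝ) ≤ (k:ℝ) := Nat.cast_nonneg k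
    linarith
  have hsol' : ∀ k, IsSolOn F S (yy k) (Icc 0 t₀) := fun k =>
    solOn_mono (Icc_subset_Icc_right (hτ0 k)) (hsol k)
  set 𝒰 : Ultrafilter ℕ := Ultrafilter.of atTop with h𝒰def
  have h𝒰 : (𝒰 : Filter ℕ) ≤ atTop := Ultrafilter.of_le atTop
  obtain ⟨γ, hγsol, hγt⟩ := funnel hX hF hS hSX ht₀ yy hsol' 𝒰
  have hb_tendsto : Tendsto (fun k => yy k 0) atTop (𝓝 z) := by
    rw [tendsto_iff_dist_tendsto_zero]
    have h1 : ∀ k : ℕ, dist (yy k 0) z ≤ ((k:ℝ) + 1)⁻¹ := fun k => by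
      rw [hy0 k, dist_comm]; exact (hbdist k).le
    refine squeeze_zero (fun k => dist_nonneg) h1 ?_
    simpa [one_div] using tendsto_one_div_add_atTop_nhds_zero_nat (𝕜 := ℝ)
  have hγ0 : γ 0 = z := tendsto_nhds_unique (hγt 0 ⟨le_rfl, ht₀⟩) (hb_tendsto.mono_left h𝒰)
  have hγt₀V : γ t₀ ∈ V := by
    apply hm
    apply subset_closure
    simp only [mflowSet, mem_iUnion, mem_singleton_iff, exists_prop]
    exact ⟨t₀, self_mem_Ici, z, rfl, γ, hγsol, hγ0, rfl⟩
  have hxω : x ∈ omegaS F S U := by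
    apply mem_omegaS_of_large_times
    intro ρ hρ
    have hGV : ∀ᶠ k in (𝒰 : Filter ℕ), yy k t₀ ∈ V :=
      (hγt t₀ ⟨ht₀, le_rfl⟩).eventually (hVo.eventually_mem hγt₀V)
    have hGk : ∀ᶠ (k : ℕ) in (𝒰 : Filter ℕ), ρ ≤ (k:ℝ) :=
      (((tendsto_natCast_atTop_atTop (R := ℝ)).eventually_ge_atTop ρ).filter_mono h𝒰)
    obtain ⟨k, hkV, hkρ⟩ := (hGV.and hGk).exists
    have hkS : yy k t₀ ∈ S := (hsol k).1 t₀ ⟨ht₀, hτ0 k⟩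
    refine ⟨τ k - t₀, by linarith [hτ k], yy k t₀, hVU ⟨hkV, hkS⟩, ?_⟩
    have h2 := mem_mflow_of_sol (hsol k) ht₀ (hτ0 k) le_rfl
    rwa [hyτ k] at h2
  rw [hU3] at hxω
  exact hxA hxω

theorem dir2 (hX : IsCompact X) (hF : FilippovOn F X) (hS : IsCompact S) (hSX : S ⊆ X)
    {A U : Set (Fin n → ℝ)} (hU1 : A ⊆ relInt S U) (hU2 : U ⊆ S)
    (hU3 : omegaS F S U = A) {x : Fin n → ℝ}
    (hα : alphaS F S {x} ⊆ dualRep F S A) : x ∉ A := by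
  intro hxA
  have hUR : ∀ w ∈ U, w ∉ dualRep F S A := by
    intro w hw hwR
    exact hwR.2 (by rw [← hU3]; exact omegaS_mono (singleton_subset_iff.2 hw))
  have hxω : x ∈ omegaS F S U := hU3 ▸ hxA
  have hext : ∀ m : ℕ, ∃ p : Fin n → ℝ, ∃ s : ℝ, ∃ u : Fin n → ℝ, ∃ Y : ℝ → Fin n → ℝ, dist x p < ((m:ℝ) + 1)⁻¹ ∧ (m:ℝ) ≤ s ∧
      u ∈ U ∧ IsSolOn F S Y (Icc 0 s) ∧ Y 0 = u ∧ Y s = p := by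
    intro m
    have h1 : x ∈ closure (mflowSet F S (Ici (m:ℝ)) U) :=
      mem_iInter₂.1 hxω _ (mem_Ici.mpr (Nat.cast_nonneg m))
    obtain ⟨p, hpD, hpdist⟩ := Metric.mem_closure_iff.1 h1 (((m:ℝ) + 1)⁻¹) (by positivity)
    simp only [mflowSet, mem_iUnion, exists_prop, mem_Ici] at hpD
    obtain ⟨s, hs, u, hu, Y, hY, hY0, hYs⟩ := hpD
    exact ⟨p, s, u, Y, hpdist, hs, hu, hY, hY0, hYs⟩
  choose p s u Y hpdist hsge hu hY hY0 hYs using hext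
  set 𝒰 : Ultrafilter ℕ := Ultrafilter.of atTop with h𝒰def
  have h𝒰 : (𝒰 : Filter ℕ) ≤ atTop := Ultrafilter.of_le atTop
  have hwex : ∀ T : ℕ, ∃ w, w ∈ A ∧ x ∈ mflow F S (T:ℝ) w := by
    intro T
    have hTc : (0:ℝ) ≤ (T:ℝ) := Nat.cast_nonneg T
    set Z : ℕ → ℝ → Fin n → ℝ := fun k τ => Y (k + T) ((s (k + T) - (T:ℝ)) + τ) with hZ
    have hσ : ∀ k : ℕ, (0:ℝ) ≤ s (k + T) - (T:ℝ) := by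
      intro k
      have h1 := hsge (k + T)
      push_cast at h1
      linarith
    have hZsol : ∀ k, IsSolOn F S (Z k) (Icc 0 (T:ℝ)) := by
      intro k
      exact solOn_shift (hσ k) hTc (by linarith) (hY (k + T))
    obtain ⟨γ, hγsol, hγt⟩ := funnel hX hF hS hSX hTc Z hZsol 𝒰
    have hZT : ∀ k, Z k (T:ℝ) = p (k + T) := by
      intro k
      simp only [hZ, sub_add_cancel]
      exact hYs (k + T)
    have hptend : Tendsto (fun k => Z k (T:ℝ)) atTop (𝓝 x) := by
      rw [tendsto_iff_dist_tendsto_zero]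
      have h1 : ∀ k : ℕ, dist (Z k (T:ℝ)) x ≤ ((k:ℝ) + 1)⁻¹ := by
        intro k
        rw [hZT k, dist_comm]
        refine (hpdist (k + T)).le.trans ?_
        have h2 : ((k:ℝ) + 1) ≤ ((k + T : ℕ):ℝ) + 1 := by
          push_cast
          have : (0:ℝ) ≤ (T:ℝ) := Nat.cast_nonneg T
          linarith
        exact inv_anti₀ (by positivity) h2
      refine squeeze_zero (fun k => dist_nonneg) h1 ?_
      simpa [one_div] using tendsto_one_div_add_atTop_nhds_zero_nat (𝕜 := ℝ)
    have hγT : γ (T:ℝ) = x := tendsto_nhds_unique (hγt (T:ℝ) ⟨hTc, le_rfl⟩)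
      (hptend.mono_left h𝒰)
    refine ⟨γ 0, ?_, ⟨γ, hγsol, rfl, hγT⟩⟩
    rw [← hU3]
    refine mem_iInter₂.2 fun ρ hρ => ?_
    refine mem_closure_of_tendsto (hγt 0 ⟨le_rfl, hTc⟩) ?_
    have hev : ∀ᶠ (k : ℕ) in atTop, ρ + (T:ℝ) ≤ (k:ℝ) :=
      (tendsto_natCast_atTop_atTop (R := ℝ)).eventually_ge_atTop _
    refine (hev.filter_mono h𝒰).mono fun k hk => ?_
    have h2 := mem_mflow_of_sol (hY (k + T)) le_rfl (hσ k) (by linarith)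
    simp only [mflowSet, mem_iUnion, exists_prop, mem_Ici]
    refine ⟨s (k + T) - (T:ℝ), ?_, u (k + T), hu (k + T), ?_⟩
    · have h3 := hsge (k + T)
      push_cast at h3
      linarith
    · rw [sub_zero, hY0 (k + T)] at h2
      simpa [hZ] using h2
  choose w hwA hwx using hwex
  have hAS : A ⊆ S := fun a ha => (hU1 ha).1
  have hAcl : IsClosed A := hU3 ▸ isClosed_omegaS U
  have hle : (((Ultrafilter.of (atTop : Filter ℕ)).map w : Ultrafilter (Fin n → ℝ)) : Filter (Fin n → ℝ)) ≤ 𝓟 S := by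
    rw [Ultrafilter.coe_map, le_principal_iff, mem_map]
    exact univ_mem' fun T => hAS (hwA T)
  obtain ⟨z, hzS, hz⟩ := hS.ultrafilter_le_nhds _ hle
  have hztend : Tendsto w ((Ultrafilter.of (atTop : Filter ℕ)) : Filter ℕ) (𝓝 z) := by
    rwa [Ultrafilter.coe_map] at hz
  have h𝒱 : ((Ultrafilter.of (atTop : Filter ℕ)) : Filter ℕ) ≤ atTop := Ultrafilter.of_le atTop
  have hzA : z ∈ A := hAcl.mem_of_tendsto hztend (Eventually.of_forall hwA)
  have hzα : z ∈ alphaS F S {x} := by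
    refine mem_iInter₂.2 fun t ht => ?_
    refine mem_closure_of_tendsto hztend ?_
    have hev : ∀ᶠ (T : ℕ) in atTop, -t ≤ (T:ℝ) :=
      (tendsto_natCast_atTop_atTop (R := ℝ)).eventually_ge_atTop _
    refine (hev.filter_mono h𝒱).mono fun T hT => ?_
    simp only [mflowDualSet, mem_iUnion, mem_singleton_iff, exists_prop,
      mem_setOf_eq, mem_Iic]
    refine ⟨-(T:ℝ), by linarith, ?_⟩
    rw [neg_neg]
    exact ⟨x, rfl, hwx T⟩
  exact hUR z (relInt_subset (hU1 hzA)) (hα hzα)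

end ConnectingRegionProof


/-- The connecting region is exactly the set of points flowing from `R` to `A`. -/
theorem connecting_region_eq {n : ℕ} (X : Set (Fin n → ℝ)) (hX : IsCompact X)
    (F : (Fin n → ℝ) → Set (Fin n → ℝ)) (hF : FilippovOn F X)
    (S : Set (Fin n → ℝ)) (hSX : S ⊆ X) (hS : IsCompact S) (hSinv : IsInvSet F S)
    (A : Set (Fin n → ℝ)) (hA : IsAttractorIn F S A) :
    S \ (A ∪ dualRep F S A) =
      {x ∈ S | omegaS F S {x} ⊆ A ∧ alphaS F S {x} ⊆ dualRep F S A} := by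
  obtain ⟨hAS, U, hU1, hU2, hU3⟩ := hA
  ext x
  constructor
  · rintro ⟨hxS, hxAR⟩
    rw [mem_union] at hxAR
    push_neg at hxAR
    obtain ⟨hxA, hxR⟩ := hxAR
    have hω : omegaS F S {x} ⊆ A := by
      by_contra h
      exact hxR ⟨hxS, h⟩
    exact ⟨hxS, hω,
      ConnectingRegionProof.dir1 hX hF hS hSX hSinv hU1 hU2 hU3 hxS hxA⟩
  · rintro ⟨hxS, hω, hα⟩
    refine ⟨hxS, ?_⟩
    rw [mem_union]
    push_neg
    exact ⟨ConnectingRegionProof.dir2 hX hF hS hSX hU1 hU2 hU3 hα, fun hR => hR.2 hω⟩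
end
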